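/- arXiv:1201.2724 — 2 statements merged into one kernel-verified Lean document; each statement's English description precedes it below -/
import Mathlib

section
/- Let Ω ⊆ ℝ² be open, let 0 < α < 1 and M₁, M₂ > 0, and let 𝒞 be a countable collection of closed axis-parallel rectangles R = I_R × J_R (products of compact intervals of positive length) such that: (1) R ⊆ Ω for every R ∈ 𝒞; (2) Ω = ⋃_{R∈𝒞} αR, where αR denotes the rectangle concentric with R whose side lengths are α times those of R; (3) every point of Ω belongs to at most M₁ of the rectangles R ∈ 𝒞; and (4) whenever R, R′ ∈ 𝒞 intersect, one has 1/M₂ < |I_R|/|I_{R′}| < M₂ and 1/M₂ < |J_R|/|J_{R′}| < M₂. Then there exist smooth functions ψ_R : ℝ² → ℝ (R ∈ 𝒞) such that: each ψ_R is supported in R; Σ_{R∈𝒞} ψ_R(x) = χ_Ω(x) for every x ∈ ℝ² (at each point at most M₁ summands are nonzero); and for every M ∈ ℕ there is a constant C = C(α, M₁, M₂, M) such that |∂^β ψ_R(x)| ≤ C |I_R|^{-β₁} |J_R|^{-β₂} for every R ∈ 𝒞, every x ∈ ℝ², and every multi-index β = (β₁, β₂) with |β| ≤ M. -/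
open Topology Filter

private lemma wpu_itd_const_mul {q : ℕ} {F : ℝ → ℝ} (hF : ContDiff ℝ (⊤:ℕ∞) F) (c : ℝ) (x : ℝ) :
    iteratedDeriv q (fun v => c * F v) x = c * iteratedDeriv q F x := by
  simp only [← iteratedDerivWithin_univ]
  exact iteratedDerivWithin_const_mul (Set.mem_univ x) uniqueDiffOn_univ c
    ((hF.of_le (m := q) (by exact_mod_cast le_top)).contDiffWithinAt)

private lemma wpu_itd_zero (q : ℕ) (x : ℝ) : iteratedDeriv q (fun _ : ℝ => (0:ℝ)) x = 0 := by
  rw [iteratedDeriv_eq_iteratedFDeriv, iteratedFDeriv_zero_fun]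
  simp

private lemma wpu_itd_add {q : ℕ} {F G : ℝ → ℝ} (hF : ContDiff ℝ (⊤:ℕ∞) F)
    (hG : ContDiff ℝ (⊤:ℕ∞) G) (x : ℝ) :
    iteratedDeriv q (fun v => F v + G v) x = iteratedDeriv q F x + iteratedDeriv q G x := by
  simp only [← iteratedDerivWithin_univ]
  exact iteratedDerivWithin_add (Set.mem_univ x) uniqueDiffOn_univ
    ((hF.of_le (m := q) (by exact_mod_cast le_top)).contDiffWithinAt)
    ((hG.of_le (m := q) (by exact_mod_cast le_top)).contDiffWithinAt)

private lemma wpu_itd_sum {σ : Type} (P : Finset σ) (c : σ → ℝ) (F : σ → ℝ → ℝ)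
    (hF : ∀ s ∈ P, ContDiff ℝ (⊤:ℕ∞) (F s)) (q : ℕ) (x : ℝ) :
    iteratedDeriv q (fun v => ∑ s ∈ P, c s * F s v) x
      = ∑ s ∈ P, c s * iteratedDeriv q (F s) x := by
  classical
  induction P using Finset.induction with
  | empty => simpa using wpu_itd_zero q x
  | @insert a P ha IH =>
    have hFa : ContDiff ℝ (⊤:ℕ∞) (fun v => c a * F a v) :=
      contDiff_const.mul (hF a (Finset.mem_insert_self a P))
    have hFP : ContDiff ℝ (⊤:ℕ∞) (fun v => ∑ s ∈ P, c s * F s v) := by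
      apply ContDiff.sum
      intro i hi
      exact contDiff_const.mul (hF i (Finset.mem_insert_of_mem hi))
    simp only [Finset.sum_insert ha]
    rw [wpu_itd_add hFa hFP x, wpu_itd_const_mul (hF a (Finset.mem_insert_self a P)) (c a) x,
      IH (fun s hs => hF s (Finset.mem_insert_of_mem hs))]

/-- mixed iterated derivative of a local tensor-sum representation -/
private lemma wpu_tensor {σ : Type} (P : Finset σ) (coef : σ → ℝ) (F G : σ → ℝ → ℝ)
    (hF : ∀ s ∈ P, ContDiff ℝ (⊤:ℕ∞) (F s)) (hG : ∀ s ∈ P, ContDiff ℝ (⊤:ℕ∞) (G s))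
    (ψ : ℝ × ℝ → ℝ) {x₁ x₂ : ℝ} {U V : Set ℝ} (hU : U ∈ 𝓝 x₁) (hV : V ∈ 𝓝 x₂)
    (hloc : ∀ u ∈ U, ∀ v ∈ V, ψ (u, v) = ∑ s ∈ P, coef s * (F s u * G s v)) (p q : ℕ) :
    iteratedDeriv p (fun u => iteratedDeriv q (fun v => ψ (u, v)) x₂) x₁
      = ∑ s ∈ P, coef s * (iteratedDeriv p (F s) x₁ * iteratedDeriv q (G s) x₂) := by
  have inner : ∀ u ∈ U, iteratedDeriv q (fun v => ψ (u, v)) x₂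
      = ∑ s ∈ P, (coef s * F s u) * iteratedDeriv q (G s) x₂ := by
    intro u hu
    have hev : (fun v => ψ (u, v)) =ᶠ[𝓝 x₂] (fun v => ∑ s ∈ P, (coef s * F s u) * G s v) := by
      filter_upwards [hV] with v hv
      rw [hloc u hu v hv]
      exact Finset.sum_congr rfl (fun s _ => by ring)
    rw [hev.iteratedDeriv_eq q]
    exact wpu_itd_sum P (fun s => coef s * F s u) G hG q x₂
  have outer : (fun u => iteratedDeriv q (fun v => ψ (u, v)) x₂)
      =ᶠ[𝓝 x₁] (fun u => ∑ s ∈ P, (coef s * iteratedDeriv q (G s) x₂) * F s u) := by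
    filter_upwards [hU] with u hu
    rw [inner u hu]
    exact Finset.sum_congr rfl (fun s _ => by ring)
  rw [outer.iteratedDeriv_eq p, wpu_itd_sum P _ F hF p x₁]
  exact Finset.sum_congr rfl (fun s _ => by ring)

/-- iterated derivative of a rescaled function -/
private lemma wpu_scaled (φ : ℝ → ℝ) (hφ : ContDiff ℝ (⊤:ℕ∞) φ) (r c : ℝ) (j : ℕ) (t : ℝ) :
    iteratedDeriv j (fun u => φ (r * (u + c))) t = r ^ j * iteratedDeriv j φ (r * (t + c)) := by
  have h3 := congrFun (iteratedDeriv_comp_add_const j (fun w => φ (r * w)) c) t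
  have hφj : ContDiff ℝ (j : ℕ∞) φ := hφ.of_le (by exact_mod_cast le_top)
  have h4 := congrFun (iteratedDeriv_comp_const_mul (n := j) hφj r) (t + c)
  exact h3.trans h4

private lemma wpu_itd_norm (f : ℝ → ℝ) (n : ℕ) (x : ℝ) :
    |iteratedDeriv n f x| = ‖iteratedFDeriv ℝ n f x‖ := by
  rw [norm_iteratedFDeriv_eq_norm_iteratedDeriv, Real.norm_eq_abs]

/-- product of functions with scaled derivative bounds -/
private lemma wpu_prod_bound {ι : Type} (M : ℕ) {E A : ℝ} (hE : 1 ≤ E) (hA : 0 < A)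
    (s : Finset ι) (f : ι → ℝ → ℝ) (hsm : ∀ k ∈ s, ContDiff ℝ (⊤:ℕ∞) (f k))
    (hb : ∀ k ∈ s, ∀ j ≤ M, ∀ t, |iteratedDeriv j (f k) t| ≤ E * A ^ j) :
    ∀ j ≤ M, ∀ t, |iteratedDeriv j (fun u => ∏ k ∈ s, f k u) t|
      ≤ (2 ^ M * E) ^ s.card * A ^ j := by
  classical
  induction s using Finset.induction with
  | empty =>
    intro j hj t
    simp only [Finset.prod_empty, Finset.card_empty, pow_zero, one_mul]
    rcases Nat.eq_zero_or_pos j with rfl | hj0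
    · simp [iteratedDeriv_zero]
    · have h0 : iteratedDeriv j (fun _ : ℝ => (1:ℝ)) t = 0 := by
        rw [iteratedDeriv_eq_iteratedFDeriv]
        have h1 : (iteratedFDeriv ℝ j (fun _ : ℝ => (1:ℝ))) = 0 := by
          rw [iteratedFDeriv_const_of_ne (by omega)]
        rw [h1]; simp
      rw [h0, abs_zero]; positivity
  | @insert a s ha IH =>
    intro j hj t
    have hsm' : ∀ k ∈ s, ContDiff ℝ (⊤:ℕ∞) (f k) :=
      fun k hk => hsm k (Finset.mem_insert_of_mem hk)
    have hb' : ∀ k ∈ s, ∀ j ≤ M, ∀ t, |iteratedDeriv j (f k) t| ≤ E * A ^ j :=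
      fun k hk => hb k (Finset.mem_insert_of_mem hk)
    have hprod_sm : ContDiff ℝ (⊤:ℕ∞) (fun u => ∏ k ∈ s, f k u) := contDiff_prod hsm'
    have ha_sm : ContDiff ℝ (⊤:ℕ∞) (f a) := hsm a (Finset.mem_insert_self a s)
    have key : |iteratedDeriv j (fun u => f a u * ∏ k ∈ s, f k u) t|
        ≤ ∑ i ∈ Finset.range (j + 1),
          (j.choose i : ℝ) * ‖iteratedFDeriv ℝ i (f a) t‖ *
            ‖iteratedFDeriv ℝ (j - i) (fun u => ∏ k ∈ s, f k u) t‖ := by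
      rw [wpu_itd_norm]
      exact norm_iteratedFDeriv_mul_le ha_sm hprod_sm t (by exact_mod_cast le_top)
    have hsum : ∑ i ∈ Finset.range (j + 1),
          (j.choose i : ℝ) * ‖iteratedFDeriv ℝ i (f a) t‖ *
            ‖iteratedFDeriv ℝ (j - i) (fun u => ∏ k ∈ s, f k u) t‖
        ≤ ∑ i ∈ Finset.range (j + 1),
          (j.choose i : ℝ) * (E * A ^ i) * ((2 ^ M * E) ^ s.card * A ^ (j - i)) := by
      apply Finset.sum_le_sum
      intro i hi
      have hi0 : i ≤ j := Nat.lt_succ_iff.mp (Finset.mem_range.mp hi)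
      have hi' : i ≤ M := le_trans hi0 hj
      have hji : j - i ≤ M := le_trans (Nat.sub_le j i) hj
      have e1 : ‖iteratedFDeriv ℝ i (f a) t‖ ≤ E * A ^ i := by
        rw [← wpu_itd_norm]; exact hb a (Finset.mem_insert_self a s) i hi' t
      have e2 : ‖iteratedFDeriv ℝ (j - i) (fun u => ∏ k ∈ s, f k u) t‖
          ≤ (2 ^ M * E) ^ s.card * A ^ (j - i) := by
        rw [← wpu_itd_norm]; exact IH hsm' hb' (j - i) hji t
      have h1 : (0:ℝ) ≤ (j.choose i : ℝ) := by positivity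
      have h2 : (0:ℝ) ≤ ‖iteratedFDeriv ℝ i (f a) t‖ := norm_nonneg _
      gcongr
    have hfinal : ∑ i ∈ Finset.range (j + 1),
          (j.choose i : ℝ) * (E * A ^ i) * ((2 ^ M * E) ^ s.card * A ^ (j - i))
        ≤ (2 ^ M * E) ^ (insert a s).card * A ^ j := by
      have hcard : (insert a s).card = s.card + 1 := Finset.card_insert_of_notMem ha
      have heach : ∀ i ∈ Finset.range (j + 1),
          (j.choose i : ℝ) * (E * A ^ i) * ((2 ^ M * E) ^ s.card * A ^ (j - i))
            = (j.choose i : ℝ) * E * (2 ^ M * E) ^ s.card * A ^ j := by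
        intro i hi
        have hi0 : i ≤ j := Nat.lt_succ_iff.mp (Finset.mem_range.mp hi)
        have : A ^ i * A ^ (j - i) = A ^ j := by
          rw [← pow_add]; congr 1; omega
        calc (j.choose i : ℝ) * (E * A ^ i) * ((2 ^ M * E) ^ s.card * A ^ (j - i))
            = (j.choose i : ℝ) * E * (2 ^ M * E) ^ s.card * (A ^ i * A ^ (j - i)) := by ring
          _ = _ := by rw [this]
      rw [Finset.sum_congr rfl heach, ← Finset.sum_mul, ← Finset.sum_mul, ← Finset.sum_mul]
      rw [← Nat.cast_sum, Nat.sum_range_choose]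
      have hpow : ((2:ℝ) ^ j : ℝ) * E * (2 ^ M * E) ^ s.card ≤ (2 ^ M * E) ^ (s.card + 1) := by
        rw [pow_succ]
        have h2j : (2:ℝ) ^ j ≤ 2 ^ M := by
          apply pow_le_pow_right₀ (by norm_num) hj
        calc (2:ℝ) ^ j * E * (2 ^ M * E) ^ s.card
            = (2 ^ M * E) ^ s.card * (2 ^ j * E) := by ring
          _ ≤ (2 ^ M * E) ^ s.card * (2 ^ M * E) := by gcongr
        
      rw [hcard]
      push_cast
      calc (2:ℝ) ^ j * E * (2 ^ M * E) ^ s.card * A ^ j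
          ≤ (2 ^ M * E) ^ (s.card + 1) * A ^ j := by gcongr
        _ = _ := rfl
    have hre : (fun u => ∏ k ∈ insert a s, f k u) = fun u => f a u * ∏ k ∈ s, f k u := by
      funext u; rw [Finset.prod_insert ha]
    rw [hre]
    calc |iteratedDeriv j (fun u => f a u * ∏ k ∈ s, f k u) t|
        ≤ _ := key
      _ ≤ _ := hsum
      _ ≤ _ := hfinal

private lemma wpu_telescope {ι : Type} (e : ι → ℕ) (he : Function.Injective e) (w : ι → ℝ) :
    ∀ (s : Finset ι),
      (∑ i ∈ s, w i * ∏ k ∈ s.filter (fun k => e k < e i), (1 - w k))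
        = 1 - ∏ i ∈ s, (1 - w i) := by
  classical
  intro s
  induction s using Finset.strongInduction with
  | _ s IH =>
    rcases s.eq_empty_or_nonempty with rfl | hne
    · simp
    · obtain ⟨i₀, hi₀s, hmax⟩ := s.exists_max_image e hne
      set s' := s.erase i₀ with hs'
      have hins : s = insert i₀ s' := (Finset.insert_erase hi₀s).symm
      have hi₀s' : i₀ ∉ s' := Finset.notMem_erase i₀ s
      have hss : s' ⊂ s := Finset.erase_ssubset hi₀s
      have hlt : ∀ k ∈ s', e k < e i₀ := fun k hk =>
        lt_of_le_of_ne (hmax k (Finset.mem_of_mem_erase hk))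
          (fun h => (Finset.ne_of_mem_erase hk) (he h))
      have hfilt₀ : (insert i₀ s').filter (fun k => e k < e i₀) = s' := by
        ext k
        simp only [Finset.mem_filter, Finset.mem_insert]
        constructor
        · rintro ⟨hk | hk, hlt'⟩
          · exact absurd hlt' (by simp [hk])
          · exact hk
        · intro hk
          exact ⟨Or.inr hk, hlt k hk⟩
      have hfilt : ∀ i ∈ s', (insert i₀ s').filter (fun k => e k < e i)
          = s'.filter (fun k => e k < e i) := by
        intro i hi
        ext k
        simp only [Finset.mem_filter, Finset.mem_insert]
        constructor
        · rintro ⟨hk | hk, hlt'⟩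
          · exact absurd hlt' (by rw [hk]; exact not_lt.mpr (le_of_lt (hlt i hi)))
          · exact ⟨hk, hlt'⟩
        · rintro ⟨hk, hlt'⟩
          exact ⟨Or.inr hk, hlt'⟩
      rw [hins, Finset.sum_insert hi₀s', Finset.prod_insert hi₀s', hfilt₀,
        Finset.sum_congr rfl (fun i hi => by rw [hfilt i hi]),
        IH s' hss]
      ring



open MeasureTheory

set_option maxHeartbeats 1000000 in
/-- Proposition (partition of unity adapted to a Whitney-type family of
rectangles): given an open `Ω ⊆ ℝ²` covered by the `α`-dilates of a countable
family of closed rectangles `R i = [a i, b i] × [c i, d i] ⊆ Ω` with bounded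
overlap `M₁` and comparable side lengths (constant `M₂`) for intersecting
rectangles, there are smooth functions `ψ i` supported in `R i` summing to
`χ_Ω`, with derivative bounds depending only on `α, M₁, M₂` and the order. -/
theorem whitney_rectangle_partition_of_unity
    (α : ℝ) (hα₀ : 0 < α) (hα₁ : α < 1) (M₁ : ℕ) (hM₁ : 0 < M₁) (M₂ : ℝ) (hM₂ : 0 < M₂) :
    ∃ C : ℕ → ℝ, (∀ M, 0 < C M) ∧
      ∀ (ι : Type) [Countable ι] (Ω : Set (ℝ × ℝ)) (a b c d : ι → ℝ),
        IsOpen Ω →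
        (∀ i, a i < b i) → (∀ i, c i < d i) →
        -- (1) each rectangle is contained in Ω
        (∀ i, Set.Icc (a i) (b i) ×ˢ Set.Icc (c i) (d i) ⊆ Ω) →
        -- (2) Ω is covered by the α-dilates
        (Ω = ⋃ i, Set.Icc ((a i + b i) / 2 - α * (b i - a i) / 2)
                    ((a i + b i) / 2 + α * (b i - a i) / 2) ×ˢ
                  Set.Icc ((c i + d i) / 2 - α * (d i - c i) / 2)
                    ((c i + d i) / 2 + α * (d i - c i) / 2)) →
        -- (3) bounded overlap
        (∀ x ∈ Ω, ({i | x ∈ Set.Icc (a i) (b i) ×ˢ Set.Icc (c i) (d i)}).Finite ∧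
          ({i | x ∈ Set.Icc (a i) (b i) ×ˢ Set.Icc (c i) (d i)}).ncard ≤ M₁) →
        -- (4) intersecting rectangles have comparable side lengths
        (∀ i j, ((Set.Icc (a i) (b i) ×ˢ Set.Icc (c i) (d i)) ∩
            (Set.Icc (a j) (b j) ×ˢ Set.Icc (c j) (d j))).Nonempty →
          1 / M₂ < (b i - a i) / (b j - a j) ∧ (b i - a i) / (b j - a j) < M₂ ∧
          1 / M₂ < (d i - c i) / (d j - c j) ∧ (d i - c i) / (d j - c j) < M₂) →
        ∃ ψ : ι → ℝ × ℝ → ℝ,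
          (∀ i, ContDiff ℝ (⊤ : ℕ∞) (ψ i)) ∧
          (∀ i, Function.support (ψ i) ⊆ Set.Icc (a i) (b i) ×ˢ Set.Icc (c i) (d i)) ∧
          (∀ x : ℝ × ℝ, HasSum (fun i => ψ i x) (Set.indicator Ω (fun _ => (1 : ℝ)) x)) ∧
          (∀ (M : ℕ) (i : ι) (x : ℝ × ℝ) (β₁ β₂ : ℕ), β₁ + β₂ ≤ M →
            |iteratedDeriv β₁ (fun u => iteratedDeriv β₂ (fun v => ψ i (u, v)) x.2) x.1| ≤
              C M * (b i - a i) ^ (-(β₁ : ℤ)) * (d i - c i) ^ (-(β₂ : ℤ))) := by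
  classical
  -- the model bump function
  set φ₀ : ContDiffBump (0:ℝ) := ⟨α, 1, hα₀, hα₁⟩ with hφ₀def
  have hφsm : ContDiff ℝ (⊤:ℕ∞) (⇑φ₀ : ℝ → ℝ) := φ₀.contDiff
  have hDex : ∀ j : ℕ, ∃ Dj : ℝ, 1 ≤ Dj ∧ ∀ t, |iteratedDeriv j (⇑φ₀ : ℝ → ℝ) t| ≤ Dj := by
    intro j
    have h1 : Continuous (iteratedFDeriv ℝ j (⇑φ₀ : ℝ → ℝ)) :=
      hφsm.continuous_iteratedFDeriv (by exact_mod_cast le_top)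
    have h2 : HasCompactSupport (iteratedFDeriv ℝ j (⇑φ₀ : ℝ → ℝ)) :=
      φ₀.hasCompactSupport.iteratedFDeriv j
    obtain ⟨D0, hD0⟩ := h1.bounded_above_of_compact_support h2
    refine ⟨max D0 1, le_max_right _ _, fun t => ?_⟩
    rw [wpu_itd_norm]
    exact le_trans (hD0 t) (le_max_left _ _)
  choose D hD1 hD2 using hDex
  set E : ℕ → ℝ := fun M => ∑ j ∈ Finset.range (M+1), D j with hEdef
  have hE1 : ∀ M, 1 ≤ E M := by
    intro M
    calc (1:ℝ) ≤ D 0 := hD1 0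
      _ ≤ E M := Finset.single_le_sum (f := fun j => D j)
          (fun j _ => le_trans zero_le_one (hD1 j)) (Finset.mem_range.mpr (by omega))
  have hED : ∀ M, ∀ j ≤ M, D j ≤ E M := by
    intro M j hj
    exact Finset.single_le_sum (f := fun j => D j)
      (fun j _ => le_trans zero_le_one (hD1 j)) (Finset.mem_range.mpr (by omega))
  set M₂' : ℝ := max M₂ 1 with hM₂'def
  have hM₂'1 : (1:ℝ) ≤ M₂' := le_max_right _ _
  have hM₂'ge : M₂ ≤ M₂' := le_max_left _ _
  have hM₂'0 : (0:ℝ) < M₂' := lt_of_lt_of_le one_pos hM₂'1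
  have hEpos : ∀ M, (0:ℝ) < E M := fun M => lt_of_lt_of_le one_pos (hE1 M)
  clear_value E M₂'
  refine ⟨fun M => 2 ^ M₁ * ((2 ^ M * E M) ^ (M₁ + 1) * (2 * M₂') ^ M) ^ 2, ?_, ?_⟩
  · intro M
    have h1 : (0:ℝ) < 2 ^ M * E M := mul_pos (pow_pos two_pos M) (hEpos M)
    have h2 : (0:ℝ) < 2 * M₂' := by linarith
    positivity
  intro ι _ Ω a b c d hΩ hab hcd h1 h2 h3 h4
  obtain ⟨e, he⟩ := exists_injective_nat ι
  set L : ι → ℝ := fun i => b i - a i with hLdef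
  set L' : ι → ℝ := fun i => d i - c i with hL'def
  have hL : ∀ i, 0 < L i := fun i => sub_pos.mpr (hab i)
  have hL' : ∀ i, 0 < L' i := fun i => sub_pos.mpr (hcd i)
  set cx : ι → ℝ := fun i => (a i + b i)/2 with hcxdef
  set cy : ι → ℝ := fun i => (c i + d i)/2 with hcydef
  set f : ι → ℝ → ℝ := fun i t => φ₀ ((L i / 2)⁻¹ * (t + (- cx i))) with hfdef
  set g : ι → ℝ → ℝ := fun i t => φ₀ ((L' i / 2)⁻¹ * (t + (- cy i))) with hgdef
  have hfsm : ∀ i, ContDiff ℝ (⊤:ℕ∞) (f i) := fun i =>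
    hφsm.comp (contDiff_const.mul (contDiff_id.add contDiff_const))
  have hgsm : ∀ i, ContDiff ℝ (⊤:ℕ∞) (g i) := fun i =>
    hφsm.comp (contDiff_const.mul (contDiff_id.add contDiff_const))
  have hfval : ∀ i t, f i t = φ₀ ((L i / 2)⁻¹ * (t + (- cx i))) := fun i t => rfl
  have hgval : ∀ i t, g i t = φ₀ ((L' i / 2)⁻¹ * (t + (- cy i))) := fun i t => rfl
  have hcxa : ∀ i, cx i - L i / 2 = a i := fun i => by simp [hcxdef, hLdef]; ring
  have hcxb : ∀ i, cx i + L i / 2 = b i := fun i => by simp [hcxdef, hLdef]; ring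
  have hcyc : ∀ i, cy i - L' i / 2 = c i := fun i => by simp [hcydef, hL'def]; ring
  have hcyd : ∀ i, cy i + L' i / 2 = d i := fun i => by simp [hcydef, hL'def]; ring
  clear_value L L' cx cy f g
    -- support of scaled bumps
  have hfsupp : ∀ i t, f i t ≠ 0 → t ∈ Set.Icc (a i) (b i) := by
    intro i t ht
    have h0 : (L i / 2)⁻¹ * (t + (- cx i)) ∈ Function.support (⇑φ₀ : ℝ → ℝ) := by
      rw [hfval] at ht; exact ht
    rw [φ₀.support_eq] at h0
    have h0' : |(L i / 2)⁻¹ * (t + (- cx i))| < 1 := by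
      rw [Metric.mem_ball, Real.dist_eq, sub_zero] at h0; exact h0
    have hLi2 : (0:ℝ) < L i / 2 := by linarith [hL i]
    rw [abs_mul, abs_inv, abs_of_pos hLi2] at h0'
    have habs : |t - cx i| < L i / 2 := by
      have := (inv_mul_lt_iff₀ hLi2).mp (by simpa [sub_eq_add_neg] using h0')
      simpa [sub_eq_add_neg, mul_one] using this
    rw [abs_lt] at habs
    exact ⟨by linarith [habs.1, hcxa i], by linarith [habs.2, hcxb i]⟩
  have hgsupp : ∀ i t, g i t ≠ 0 → t ∈ Set.Icc (c i) (d i) := by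
    intro i t ht
    have h0 : (L' i / 2)⁻¹ * (t + (- cy i)) ∈ Function.support (⇑φ₀ : ℝ → ℝ) := by
      rw [hgval] at ht; exact ht
    rw [φ₀.support_eq] at h0
    have h0' : |(L' i / 2)⁻¹ * (t + (- cy i))| < 1 := by
      rw [Metric.mem_ball, Real.dist_eq, sub_zero] at h0; exact h0
    have hLi2 : (0:ℝ) < L' i / 2 := by linarith [hL' i]
    rw [abs_mul, abs_inv, abs_of_pos hLi2] at h0'
    have habs : |t - cy i| < L' i / 2 := by
      have := (inv_mul_lt_iff₀ hLi2).mp (by simpa [sub_eq_add_neg] using h0')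
      simpa [sub_eq_add_neg, mul_one] using this
    rw [abs_lt] at habs
    exact ⟨by linarith [habs.1, hcyc i], by linarith [habs.2, hcyd i]⟩
  -- the bumps are 1 on the α-dilates
  have hfone : ∀ i t, t ∈ Set.Icc (cx i - α * L i / 2) (cx i + α * L i / 2) → f i t = 1 := by
    intro i t ht
    rw [hfval]
    apply φ₀.one_of_mem_closedBall
    have hLi2 : (0:ℝ) < L i / 2 := by linarith [hL i]
    have habs : |t - cx i| ≤ α * L i / 2 := by
      rw [abs_le]; constructor <;> [linarith [ht.1]; linarith [ht.2]]
    have : |(L i / 2)⁻¹ * (t + (- cx i))| ≤ α := by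
      rw [abs_mul, abs_inv, abs_of_pos hLi2]
      rw [inv_mul_le_iff₀ hLi2]
      calc |t + -cx i| = |t - cx i| := by rw [sub_eq_add_neg]
        _ ≤ α * L i / 2 := habs
        _ = L i / 2 * α := by ring
    rw [Metric.mem_closedBall, Real.dist_eq, sub_zero]
    exact this
  have hgone : ∀ i t, t ∈ Set.Icc (cy i - α * L' i / 2) (cy i + α * L' i / 2) → g i t = 1 := by
    intro i t ht
    rw [hgval]
    apply φ₀.one_of_mem_closedBall
    have hLi2 : (0:ℝ) < L' i / 2 := by linarith [hL' i]
    have habs : |t - cy i| ≤ α * L' i / 2 := by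
      rw [abs_le]; constructor <;> [linarith [ht.1]; linarith [ht.2]]
    have : |(L' i / 2)⁻¹ * (t + (- cy i))| ≤ α := by
      rw [abs_mul, abs_inv, abs_of_pos hLi2]
      rw [inv_mul_le_iff₀ hLi2]
      calc |t + -cy i| = |t - cy i| := by rw [sub_eq_add_neg]
        _ ≤ α * L' i / 2 := habs
        _ = L' i / 2 * α := by ring
    rw [Metric.mem_closedBall, Real.dist_eq, sub_zero]
    exact this
  -- derivative bounds for the scaled bumps
  have hfd : ∀ i (j : ℕ) (t : ℝ), |iteratedDeriv j (f i) t| ≤ D j * ((L i / 2)⁻¹) ^ j := by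
    intro i j t
    have hfun : f i = fun u => φ₀ ((L i / 2)⁻¹ * (u + (- cx i))) := funext (hfval i)
    rw [hfun, wpu_scaled (⇑φ₀) hφsm ((L i / 2)⁻¹) (- cx i) j t]
    have hLi2 : (0:ℝ) < L i / 2 := by linarith [hL i]
    rw [abs_mul, abs_pow, abs_inv, abs_of_pos hLi2]
    have hinv : (0:ℝ) ≤ (L i / 2)⁻¹ := le_of_lt (inv_pos.mpr hLi2)
    exact le_trans (mul_le_mul_of_nonneg_left (hD2 j _) (pow_nonneg hinv j))
      (le_of_eq (mul_comm _ _))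
  have hgd : ∀ i (j : ℕ) (t : ℝ), |iteratedDeriv j (g i) t| ≤ D j * ((L' i / 2)⁻¹) ^ j := by
    intro i j t
    have hfun : g i = fun u => φ₀ ((L' i / 2)⁻¹ * (u + (- cy i))) := funext (hgval i)
    rw [hfun, wpu_scaled (⇑φ₀) hφsm ((L' i / 2)⁻¹) (- cy i) j t]
    have hLi2 : (0:ℝ) < L' i / 2 := by linarith [hL' i]
    rw [abs_mul, abs_pow, abs_inv, abs_of_pos hLi2]
    have hinv : (0:ℝ) ≤ (L' i / 2)⁻¹ := le_of_lt (inv_pos.mpr hLi2)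
    exact le_trans (mul_le_mul_of_nonneg_left (hD2 j _) (pow_nonneg hinv j))
      (le_of_eq (mul_comm _ _))
  -- the finite "earlier" index sets
  have hSnfin : ∀ i, {k | e k < e i}.Finite := by
    intro i
    have : {k | e k < e i} = e ⁻¹' (Set.Iio (e i)) := rfl
    rw [this]
    exact Set.Finite.preimage he.injOn (Set.finite_Iio (e i))
  set Sn : ι → Finset ι := fun i => (hSnfin i).toFinset with hSndef
  have hSnmem : ∀ i k, k ∈ Sn i ↔ e k < e i := by
    intro i k
    simp [hSndef, Set.Finite.mem_toFinset]
  set ψ : ι → ℝ × ℝ → ℝ :=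
    fun i p => (f i p.1 * g i p.2) * ∏ k ∈ Sn i, (1 - f k p.1 * g k p.2) with hψdef
  have hψval : ∀ i p, ψ i p
      = (f i p.1 * g i p.2) * ∏ k ∈ Sn i, (1 - f k p.1 * g k p.2) := fun i p => rfl
  clear_value Sn ψ
  have hψsm : ∀ i, ContDiff ℝ (⊤:ℕ∞) (ψ i) := by
    intro i
    have : ψ i = fun p : ℝ × ℝ =>
        (f i p.1 * g i p.2) * ∏ k ∈ Sn i, (1 - f k p.1 * g k p.2) := funext (hψval i)
    rw [this]
    apply ContDiff.mul
    · exact ((hfsm i).comp contDiff_fst).mul ((hgsm i).comp contDiff_snd)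
    · apply contDiff_prod
      intro k _
      exact contDiff_const.sub (((hfsm k).comp contDiff_fst).mul ((hgsm k).comp contDiff_snd))
  -- support
  have hψsupp : ∀ i, Function.support (ψ i) ⊆ Set.Icc (a i) (b i) ×ˢ Set.Icc (c i) (d i) := by
    intro i p hp
    rw [Function.mem_support, hψval] at hp
    have hfg : f i p.1 * g i p.2 ≠ 0 := fun h => hp (by rw [h, zero_mul])
    exact ⟨hfsupp i p.1 (fun h => hfg (by rw [h, zero_mul])),
      hgsupp i p.2 (fun h => hfg (by rw [h, mul_zero]))⟩
  -- the sum property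
  have hψsum : ∀ x : ℝ × ℝ, HasSum (fun i => ψ i x) (Set.indicator Ω (fun _ => (1 : ℝ)) x) := by
    intro x
    set w : ι → ℝ := fun k => f k x.1 * g k x.2 with hwdef
    have hw0 : ∀ k, x ∉ Set.Icc (a k) (b k) ×ˢ Set.Icc (c k) (d k) → w k = 0 := by
      intro k hk
      by_contra hne
      rw [hwdef] at hne
      exact hk ⟨hfsupp k x.1 (fun h => hne (by simp [h])),
        hgsupp k x.2 (fun h => hne (by simp [h]))⟩
    have hfinR : {k | x ∈ Set.Icc (a k) (b k) ×ˢ Set.Icc (c k) (d k)}.Finite := by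
      by_cases hx : x ∈ Ω
      · exact (h3 x hx).1
      · have : {k | x ∈ Set.Icc (a k) (b k) ×ˢ Set.Icc (c k) (d k)} = ∅ := by
          ext k
          simp only [Set.mem_setOf_eq, Set.mem_empty_iff_false, iff_false]
          exact fun hk => hx (h1 k hk)
        rw [this]; exact Set.finite_empty
    set T : Finset ι := hfinR.toFinset with hTdef
    have hTmem : ∀ k, k ∈ T ↔ x ∈ Set.Icc (a k) (b k) ×ˢ Set.Icc (c k) (d k) := by
      intro k; simp [hTdef, Set.Finite.mem_toFinset]
    have hzero : ∀ k ∉ T, ψ k x = 0 := by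
      intro k hk
      by_contra hne
      exact hk ((hTmem k).mpr (hψsupp k (Function.mem_support.mpr hne)))
    have hkey : ∑ k ∈ T, ψ k x = Set.indicator Ω (fun _ => (1 : ℝ)) x := by
      have hterm : ∀ k ∈ T, ψ k x = w k * ∏ j ∈ T.filter (fun j => e j < e k), (1 - w j) := by
        intro k _
        rw [hψval]
        congr 1
        have hsub : T.filter (fun j => e j < e k) ⊆ Sn k := by
          intro j hj
          rw [hSnmem]
          exact (Finset.mem_filter.mp hj).2
        rw [← Finset.prod_subset hsub]
        intro j hjSn hjT
        have hx' : x ∉ Set.Icc (a j) (b j) ×ˢ Set.Icc (c j) (d j) := by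
          intro hmem
          exact hjT (Finset.mem_filter.mpr ⟨(hTmem j).mpr hmem, (hSnmem k j).mp hjSn⟩)
        have hwj0 : f j x.1 * g j x.2 = 0 := by
          have := hw0 j hx'; rwa [hwdef] at this
        rw [hwj0, sub_zero]
      rw [Finset.sum_congr rfl hterm, wpu_telescope e he w T]
      by_cases hx : x ∈ Ω
      · rw [Set.indicator_of_mem hx]
        have hcov := h2 ▸ hx
        obtain ⟨j, hj⟩ := Set.mem_iUnion.mp hcov
        have hj1 : x.1 ∈ Set.Icc (cx j - α * L j / 2) (cx j + α * L j / 2) := by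
          have e1 : cx j - α * L j / 2 = (a j + b j) / 2 - α * (b j - a j) / 2 := by
            rw [hcxdef, hLdef]
          have e2 : cx j + α * L j / 2 = (a j + b j) / 2 + α * (b j - a j) / 2 := by
            rw [hcxdef, hLdef]
          rw [e1, e2]
          exact hj.1
        have hj2 : x.2 ∈ Set.Icc (cy j - α * L' j / 2) (cy j + α * L' j / 2) := by
          have e1 : cy j - α * L' j / 2 = (c j + d j) / 2 - α * (d j - c j) / 2 := by
            rw [hcydef, hL'def]
          have e2 : cy j + α * L' j / 2 = (c j + d j) / 2 + α * (d j - c j) / 2 := by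
            rw [hcydef, hL'def]
          rw [e1, e2]
          exact hj.2
        have hwj : w j = 1 := by
          rw [hwdef]
          simp only [hfone j x.1 hj1, hgone j x.2 hj2, mul_one]
        have hjT : j ∈ T := by
          rw [hTmem]
          have hα1 : α * L j / 2 ≤ L j / 2 := by
            have := hL j
            nlinarith
          have hα1' : α * L' j / 2 ≤ L' j / 2 := by
            have := hL' j
            nlinarith
          have h0α : 0 < α * L j / 2 := by have := hL j; positivity
          constructor
          · constructor
            · linarith [hj1.1, hcxa j]
            · linarith [hj1.2, hcxb j]
          · constructor
            · linarith [hj2.1, hcyc j]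
            · linarith [hj2.2, hcyd j]
        rw [Finset.prod_eq_zero hjT (by rw [hwj]; ring)]
        ring
      · rw [Set.indicator_of_notMem hx]
        have hT0 : T = ∅ := by
          apply Finset.eq_empty_of_forall_notMem
          intro k hk
          exact hx (h1 k ((hTmem k).mp hk))
        rw [hT0]
        simp
    exact hkey ▸ hasSum_sum_of_ne_finset_zero hzero
  -- the derivative bounds
  refine ⟨ψ, hψsm, hψsupp, hψsum, ?_⟩
  intro M i x β₁ β₂ hβ
  beta_reduce
  have hbL : b i - a i = L i := by simp [hLdef]
  have hdL : d i - c i = L' i := by simp [hL'def]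
  rw [hbL, hdL]
  have hCpos : (0:ℝ) < 2 ^ M₁ * ((2 ^ M * E M) ^ (M₁ + 1) * (2 * M₂') ^ M) ^ 2 := by
    have h1' : (0:ℝ) < 2 ^ M * E M := mul_pos (pow_pos two_pos M) (hEpos M)
    have h2' : (0:ℝ) < 2 * M₂' := by linarith
    positivity
  have hz1 : (L i) ^ (-(β₁:ℤ)) = ((L i) ^ β₁)⁻¹ := by
    rw [zpow_neg, zpow_natCast]
  have hz2 : (L' i) ^ (-(β₂:ℤ)) = ((L' i) ^ β₂)⁻¹ := by
    rw [zpow_neg, zpow_natCast]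
  have hRHSpos : (0:ℝ) < 2 ^ M₁ * ((2 ^ M * E M) ^ (M₁ + 1) * (2 * M₂') ^ M) ^ 2 *
      (L i) ^ (-(β₁:ℤ)) * (L' i) ^ (-(β₂:ℤ)) := by
    apply mul_pos (mul_pos hCpos _) _
    · rw [hz1]; exact inv_pos.mpr (pow_pos (hL i) β₁)
    · rw [hz2]; exact inv_pos.mpr (pow_pos (hL' i) β₂)
  by_cases hx1 : x.1 ∉ Set.Icc (a i) (b i)
  · -- ψ i vanishes near x.1 in the first variable
    have hev : (fun u => iteratedDeriv β₂ (fun v => ψ i (u, v)) x.2) =ᶠ[𝓝 x.1]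
        (fun _ => (0:ℝ)) := by
      have hopen : IsOpen (Set.Icc (a i) (b i))ᶜ := isOpen_compl_iff.mpr isClosed_Icc
      filter_upwards [hopen.mem_nhds hx1] with u hu
      have hzero : (fun v => ψ i (u, v)) = (fun _ => (0:ℝ)) := by
        funext v
        rw [hψval]
        have hf0 : f i u = 0 := by
          by_contra hne; exact hu (hfsupp i u hne)
        simp [hf0]
      rw [hzero, wpu_itd_zero]
    rw [hev.iteratedDeriv_eq β₁, wpu_itd_zero, abs_zero]
    exact le_of_lt hRHSpos
  push_neg at hx1
  by_cases hx2 : x.2 ∉ Set.Icc (c i) (d i)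
  · have hall : (fun u => iteratedDeriv β₂ (fun v => ψ i (u, v)) x.2) = (fun _ => (0:ℝ)) := by
      funext u
      have hopen : IsOpen (Set.Icc (c i) (d i))ᶜ := isOpen_compl_iff.mpr isClosed_Icc
      have hev2 : (fun v => ψ i (u, v)) =ᶠ[𝓝 x.2] (fun _ => (0:ℝ)) := by
        filter_upwards [hopen.mem_nhds hx2] with v hv
        rw [hψval]
        have hg0 : g i v = 0 := by
          by_contra hne; exact hv (hgsupp i v hne)
        simp [hg0]
      rw [hev2.iteratedDeriv_eq β₂, wpu_itd_zero]
    rw [hall, wpu_itd_zero, abs_zero]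
    exact le_of_lt hRHSpos
  push_neg at hx2
  -- main case : x ∈ R i
  have hx : x ∈ Set.Icc (a i) (b i) ×ˢ Set.Icc (c i) (d i) := ⟨hx1, hx2⟩
  have hxΩ : x ∈ Ω := h1 i hx
  set A : Finset ι := (Sn i).filter
    (fun k => x ∈ Set.Icc (a k) (b k) ×ˢ Set.Icc (c k) (d k)) with hAdef
  have hAcard : A.card ≤ M₁ := by
    have hsub : (↑A : Set ι) ⊆ {k | x ∈ Set.Icc (a k) (b k) ×ˢ Set.Icc (c k) (d k)} := by
      intro k hk
      exact (Finset.mem_filter.mp hk).2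
    calc A.card = (↑A : Set ι).ncard := (Set.ncard_coe_finset A).symm
      _ ≤ ({k | x ∈ Set.Icc (a k) (b k) ×ˢ Set.Icc (c k) (d k)}).ncard :=
          Set.ncard_le_ncard hsub (h3 x hxΩ).1
      _ ≤ M₁ := (h3 x hxΩ).2
  have hiSn : i ∉ Sn i := by
    rw [hSnmem]; omega
  have hiA : i ∉ A := fun h => hiSn (Finset.mem_filter.mp h).1
  set T2 : Finset ι := (Sn i).filter
    (fun k => ¬ (x ∈ Set.Icc (a k) (b k) ×ˢ Set.Icc (c k) (d k))) with hT2def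
  set Ufun : ι → Set ℝ := fun k =>
    if x.1 ∈ Set.Icc (a k) (b k) then Set.univ else (Set.Icc (a k) (b k))ᶜ with hUfundef
  set Vfun : ι → Set ℝ := fun k =>
    if x.1 ∈ Set.Icc (a k) (b k) then (Set.Icc (c k) (d k))ᶜ else Set.univ with hVfundef
  have hUopen : ∀ k, IsOpen (Ufun k) ∧ x.1 ∈ Ufun k := by
    intro k
    simp only [hUfundef]
    by_cases hc : x.1 ∈ Set.Icc (a k) (b k)
    · rw [if_pos hc]; exact ⟨isOpen_univ, Set.mem_univ _⟩
    · rw [if_neg hc]; exact ⟨isOpen_compl_iff.mpr isClosed_Icc, hc⟩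
  have hVopen : ∀ k ∈ T2, IsOpen (Vfun k) ∧ x.2 ∈ Vfun k := by
    intro k hk
    have hkR : ¬ (x ∈ Set.Icc (a k) (b k) ×ˢ Set.Icc (c k) (d k)) :=
      (Finset.mem_filter.mp hk).2
    simp only [hVfundef]
    by_cases hc : x.1 ∈ Set.Icc (a k) (b k)
    · rw [if_pos hc]
      exact ⟨isOpen_compl_iff.mpr isClosed_Icc, fun h2' => hkR ⟨hc, h2'⟩⟩
    · rw [if_neg hc]; exact ⟨isOpen_univ, Set.mem_univ _⟩
  set U : Set ℝ := ⋂ k ∈ T2, Ufun k with hUdef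
  set V : Set ℝ := ⋂ k ∈ T2, Vfun k with hVdef
  have hU : U ∈ 𝓝 x.1 := by
    rw [hUdef]
    rw [Filter.biInter_finset_mem]
    intro k _
    exact ((hUopen k).1).mem_nhds (hUopen k).2
  have hV : V ∈ 𝓝 x.2 := by
    rw [hVdef]
    rw [Filter.biInter_finset_mem]
    intro k hk
    exact ((hVopen k hk).1).mem_nhds (hVopen k hk).2
  have hkill : ∀ k ∈ T2, ∀ u ∈ U, ∀ v ∈ V, f k u * g k v = 0 := by
    intro k hk u hu v hv
    have hu' : u ∈ Ufun k := by
      rw [hUdef] at hu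
      exact Set.mem_iInter₂.mp hu k hk
    have hv' : v ∈ Vfun k := by
      rw [hVdef] at hv
      exact Set.mem_iInter₂.mp hv k hk
    by_cases hc : x.1 ∈ Set.Icc (a k) (b k)
    · have : g k v = 0 := by
        by_contra hne
        rw [hVfundef] at hv'
        simp only [hc, if_pos] at hv'
        exact hv' (hgsupp k v hne)
      rw [this, mul_zero]
    · have : f k u = 0 := by
        by_contra hne
        rw [hUfundef] at hu'
        simp only [hc, if_neg, if_false] at hu'
        exact hu' (hfsupp k u hne)
      rw [this, zero_mul]
  have hASn : A ⊆ Sn i := Finset.filter_subset _ _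
  have hloc : ∀ u ∈ U, ∀ v ∈ V, ψ i (u, v)
      = ∑ S ∈ A.powerset, ((-1:ℝ)) ^ S.card *
          ((∏ k ∈ insert i S, f k u) * (∏ k ∈ insert i S, g k v)) := by
    intro u hu v hv
    rw [hψval]
    have hsplit : ∏ k ∈ Sn i, (1 - f k u * g k v)
        = (∏ k ∈ A, (1 - f k u * g k v)) * ∏ k ∈ T2, (1 - f k u * g k v) := by
      rw [hAdef, hT2def]
      exact (Finset.prod_filter_mul_prod_filter_not (Sn i) _ _).symm
    have hT21 : ∏ k ∈ T2, (1 - f k u * g k v) = 1 :=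
      Finset.prod_eq_one (fun k hk => by rw [hkill k hk u hu v hv, sub_zero])
    rw [hsplit, hT21, mul_one]
    have hexp : ∏ k ∈ A, (1 - f k u * g k v)
        = ∑ S ∈ A.powerset, ((-1:ℝ)) ^ S.card * ((∏ k ∈ S, f k u) * (∏ k ∈ S, g k v)) := by
      have h₁ : ∀ k ∈ A, (1:ℝ) - f k u * g k v = (-(f k u * g k v)) + 1 := fun k _ => by ring
      rw [Finset.prod_congr rfl h₁, Finset.prod_add]
      apply Finset.sum_congr rfl
      intro S _
      rw [Finset.prod_const_one, mul_one]
      have h₂ : ∀ k ∈ S, -(f k u * g k v) = (-1:ℝ) * (f k u * g k v) := fun k _ => by ring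
      rw [Finset.prod_congr rfl h₂, Finset.prod_mul_distrib, Finset.prod_const,
        Finset.prod_mul_distrib]
    rw [hexp, Finset.mul_sum]
    apply Finset.sum_congr rfl
    intro S hS
    have hiS : i ∉ S := fun h => hiA (Finset.mem_powerset.mp hS h)
    rw [Finset.prod_insert hiS, Finset.prod_insert hiS]
    ring
  have hFsm : ∀ S ∈ A.powerset, ContDiff ℝ (⊤:ℕ∞) (fun u => ∏ k ∈ insert i S, f k u) :=
    fun S _ => contDiff_prod (fun k _ => hfsm k)
  have hGsm : ∀ S ∈ A.powerset, ContDiff ℝ (⊤:ℕ∞) (fun v => ∏ k ∈ insert i S, g k v) :=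
    fun S _ => contDiff_prod (fun k _ => hgsm k)
  have htens := wpu_tensor A.powerset (fun S => ((-1:ℝ)) ^ S.card)
    (fun S u => ∏ k ∈ insert i S, f k u) (fun S v => ∏ k ∈ insert i S, g k v)
    hFsm hGsm (ψ i) hU hV hloc β₁ β₂
  rw [htens]
  -- bounds for each tensor factor
  have hxk : ∀ S ∈ A.powerset, ∀ k ∈ insert i S,
      x ∈ Set.Icc (a k) (b k) ×ˢ Set.Icc (c k) (d k) := by
    intro S hS k hk
    rcases Finset.mem_insert.mp hk with rfl | hk'
    · exact hx
    · exact (Finset.mem_filter.mp (Finset.mem_powerset.mp hS hk')).2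
  have hApos1 : (0:ℝ) < 2 * M₂' / L i := div_pos (by linarith) (hL i)
  have hApos2 : (0:ℝ) < 2 * M₂' / L' i := div_pos (by linarith) (hL' i)
  have hfbound : ∀ S ∈ A.powerset, ∀ k ∈ insert i S, ∀ j ≤ M, ∀ t,
      |iteratedDeriv j (f k) t| ≤ E M * (2 * M₂' / L i) ^ j := by
    intro S hS k hk j hj t
    have hkx := hxk S hS k hk
    have hcomp := h4 i k ⟨x, hx, hkx⟩
    have h₂ : L i / L k < M₂ := by simpa [hLdef] using hcomp.2.1
    have hLk : L i ≤ M₂' * L k := by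
      have h₃ : L i < M₂ * L k := by
        have := (div_lt_iff₀ (hL k)).mp h₂
        linarith
      have h₄ : M₂ * L k ≤ M₂' * L k := mul_le_mul_of_nonneg_right hM₂'ge (le_of_lt (hL k))
      linarith
    have hinvle : (L k / 2)⁻¹ ≤ 2 * M₂' / L i := by
      rw [inv_div]
      rw [div_le_div_iff₀ (hL k) (hL i)]
      calc 2 * L i ≤ 2 * (M₂' * L k) := by linarith
        _ = 2 * M₂' * L k := by ring
    calc |iteratedDeriv j (f k) t| ≤ D j * ((L k / 2)⁻¹) ^ j := hfd k j t
      _ ≤ E M * (2 * M₂' / L i) ^ j := by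
          apply mul_le_mul (hED M j hj)
            (pow_le_pow_left₀ (le_of_lt (inv_pos.mpr (by linarith [hL k]))) hinvle j)
            (pow_nonneg (le_of_lt (inv_pos.mpr (by linarith [hL k]))) j)
            (le_trans zero_le_one (hE1 M))
  have hgbound : ∀ S ∈ A.powerset, ∀ k ∈ insert i S, ∀ j ≤ M, ∀ t,
      |iteratedDeriv j (g k) t| ≤ E M * (2 * M₂' / L' i) ^ j := by
    intro S hS k hk j hj t
    have hkx := hxk S hS k hk
    have hcomp := h4 i k ⟨x, hx, hkx⟩
    have h₂ : L' i / L' k < M₂ := by simpa [hL'def] using hcomp.2.2.2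
    have hLk : L' i ≤ M₂' * L' k := by
      have h₃ : L' i < M₂ * L' k := by
        have := (div_lt_iff₀ (hL' k)).mp h₂
        linarith
      have h₄ : M₂ * L' k ≤ M₂' * L' k := mul_le_mul_of_nonneg_right hM₂'ge (le_of_lt (hL' k))
      linarith
    have hinvle : (L' k / 2)⁻¹ ≤ 2 * M₂' / L' i := by
      rw [inv_div]
      rw [div_le_div_iff₀ (hL' k) (hL' i)]
      calc 2 * L' i ≤ 2 * (M₂' * L' k) := by linarith
        _ = 2 * M₂' * L' k := by ring
    calc |iteratedDeriv j (g k) t| ≤ D j * ((L' k / 2)⁻¹) ^ j := hgd k j t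
      _ ≤ E M * (2 * M₂' / L' i) ^ j := by
          apply mul_le_mul (hED M j hj)
            (pow_le_pow_left₀ (le_of_lt (inv_pos.mpr (by linarith [hL' k]))) hinvle j)
            (pow_nonneg (le_of_lt (inv_pos.mpr (by linarith [hL' k]))) j)
            (le_trans zero_le_one (hE1 M))
  have h2ME : (1:ℝ) ≤ 2 ^ M * E M := by
    have h2M : (1:ℝ) ≤ 2 ^ M := one_le_pow₀ (by norm_num)
    calc (1:ℝ) ≤ 2 ^ M := h2M
      _ ≤ 2 ^ M * E M := le_mul_of_one_le_right (by positivity) (hE1 M)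
  have hcard : ∀ S ∈ A.powerset, (insert i S).card ≤ M₁ + 1 := by
    intro S hS
    calc (insert i S).card ≤ S.card + 1 := Finset.card_insert_le i S
      _ ≤ A.card + 1 := by
          have := Finset.card_le_card (Finset.mem_powerset.mp hS); omega
      _ ≤ M₁ + 1 := by omega
  have hL1inv : (0:ℝ) ≤ ((L i) ^ β₁)⁻¹ := inv_nonneg.mpr (pow_nonneg (le_of_lt (hL i)) _)
  have hL2inv : (0:ℝ) ≤ ((L' i) ^ β₂)⁻¹ := inv_nonneg.mpr (pow_nonneg (le_of_lt (hL' i)) _)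
  have hBF : ∀ S ∈ A.powerset, |iteratedDeriv β₁ (fun u => ∏ k ∈ insert i S, f k u) x.1|
      ≤ (2 ^ M * E M) ^ (M₁ + 1) * ((2 * M₂') ^ M * ((L i) ^ β₁)⁻¹) := by
    intro S hS
    have hb := wpu_prod_bound M (hE1 M) hApos1 (insert i S) f
      (fun k _ => hfsm k) (hfbound S hS) β₁ (by omega) x.1
    refine le_trans hb ?_
    have hsplit : (2 * M₂' / L i) ^ β₁ = (2 * M₂') ^ β₁ * ((L i) ^ β₁)⁻¹ := by
      rw [div_pow, div_eq_mul_inv]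
    rw [hsplit]
    have e1 : (2 ^ M * E M) ^ (insert i S).card ≤ (2 ^ M * E M) ^ (M₁+1) :=
      pow_le_pow_right₀ h2ME (hcard S hS)
    have e2 : (2 * M₂') ^ β₁ ≤ (2 * M₂') ^ M :=
      pow_le_pow_right₀ (by linarith) (by omega)
    exact mul_le_mul e1 (mul_le_mul_of_nonneg_right e2 hL1inv)
      (mul_nonneg (pow_nonneg (by linarith) _) hL1inv)
      (le_trans zero_le_one (one_le_pow₀ h2ME))
  have hBG : ∀ S ∈ A.powerset, |iteratedDeriv β₂ (fun v => ∏ k ∈ insert i S, g k v) x.2|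
      ≤ (2 ^ M * E M) ^ (M₁ + 1) * ((2 * M₂') ^ M * ((L' i) ^ β₂)⁻¹) := by
    intro S hS
    have hb := wpu_prod_bound M (hE1 M) hApos2 (insert i S) g
      (fun k _ => hgsm k) (hgbound S hS) β₂ (by omega) x.2
    refine le_trans hb ?_
    have hsplit : (2 * M₂' / L' i) ^ β₂ = (2 * M₂') ^ β₂ * ((L' i) ^ β₂)⁻¹ := by
      rw [div_pow, div_eq_mul_inv]
    rw [hsplit]
    have e1 : (2 ^ M * E M) ^ (insert i S).card ≤ (2 ^ M * E M) ^ (M₁+1) :=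
      pow_le_pow_right₀ h2ME (hcard S hS)
    have e2 : (2 * M₂') ^ β₂ ≤ (2 * M₂') ^ M :=
      pow_le_pow_right₀ (by linarith) (by omega)
    exact mul_le_mul e1 (mul_le_mul_of_nonneg_right e2 hL2inv)
      (mul_nonneg (pow_nonneg (by linarith) _) hL2inv)
      (le_trans zero_le_one (one_le_pow₀ h2ME))
  -- put everything together
  rw [hz1, hz2]
  have hterm : ∀ S ∈ A.powerset,
      |((-1:ℝ)) ^ S.card * (iteratedDeriv β₁ (fun u => ∏ k ∈ insert i S, f k u) x.1 *
        iteratedDeriv β₂ (fun v => ∏ k ∈ insert i S, g k v) x.2)|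
      ≤ ((2 ^ M * E M) ^ (M₁ + 1) * ((2 * M₂') ^ M * ((L i) ^ β₁)⁻¹)) *
        ((2 ^ M * E M) ^ (M₁ + 1) * ((2 * M₂') ^ M * ((L' i) ^ β₂)⁻¹)) := by
    intro S hS
    rw [abs_mul, abs_pow, abs_neg, abs_one, one_pow, one_mul, abs_mul]
    exact mul_le_mul (hBF S hS) (hBG S hS) (abs_nonneg _)
      (mul_nonneg (le_trans zero_le_one (one_le_pow₀ h2ME))
        (mul_nonneg (pow_nonneg (by linarith) _) hL1inv))
  calc |∑ S ∈ A.powerset, ((-1:ℝ)) ^ S.card *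
        (iteratedDeriv β₁ (fun u => ∏ k ∈ insert i S, f k u) x.1 *
          iteratedDeriv β₂ (fun v => ∏ k ∈ insert i S, g k v) x.2)|
      ≤ ∑ S ∈ A.powerset, |((-1:ℝ)) ^ S.card *
        (iteratedDeriv β₁ (fun u => ∏ k ∈ insert i S, f k u) x.1 *
          iteratedDeriv β₂ (fun v => ∏ k ∈ insert i S, g k v) x.2)| :=
        Finset.abs_sum_le_sum_abs _ _
    _ ≤ ∑ _S ∈ A.powerset,
        ((2 ^ M * E M) ^ (M₁ + 1) * ((2 * M₂') ^ M * ((L i) ^ β₁)⁻¹)) *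
        ((2 ^ M * E M) ^ (M₁ + 1) * ((2 * M₂') ^ M * ((L' i) ^ β₂)⁻¹)) :=
        Finset.sum_le_sum hterm
    _ = (A.powerset.card : ℝ) *
        (((2 ^ M * E M) ^ (M₁ + 1) * ((2 * M₂') ^ M * ((L i) ^ β₁)⁻¹)) *
        ((2 ^ M * E M) ^ (M₁ + 1) * ((2 * M₂') ^ M * ((L' i) ^ β₂)⁻¹))) := by
        rw [Finset.sum_const, nsmul_eq_mul]
    _ ≤ (2:ℝ) ^ M₁ *
        (((2 ^ M * E M) ^ (M₁ + 1) * ((2 * M₂') ^ M * ((L i) ^ β₁)⁻¹)) *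
        ((2 ^ M * E M) ^ (M₁ + 1) * ((2 * M₂') ^ M * ((L' i) ^ β₂)⁻¹))) := by
        apply mul_le_mul_of_nonneg_right
        · rw [Finset.card_powerset]
          calc ((2 ^ A.card : ℕ) : ℝ) = (2:ℝ) ^ A.card := by push_cast; ring
            _ ≤ (2:ℝ) ^ M₁ := pow_le_pow_right₀ (by norm_num) hAcard
        · apply mul_nonneg <;>
            exact mul_nonneg (le_trans zero_le_one (one_le_pow₀ h2ME))
              (mul_nonneg (pow_nonneg (by linarith) _) (by assumption))
    _ = 2 ^ M₁ * ((2 ^ M * E M) ^ (M₁ + 1) * (2 * M₂') ^ M) ^ 2 *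
        ((L i) ^ β₁)⁻¹ * ((L' i) ^ β₂)⁻¹ := by ring
end

section
/- There exist absolute constants c, C > 0 with the following property. Let ℐ be a finite collection of dyadic intervals in ℝ and let (a_I)_{I∈ℐ} be complex numbers. Define A := sup_J ((1/|J|) Σ_{I∈ℐ, I⊆J} |a_I|²)^{1/2} and B := sup_J (1/|J|) ‖(Σ_{I∈ℐ, I⊆J} |a_I|² 1_I / |I|)^{1/2}‖_{L^{1,∞}(ℝ)}, where both suprema are taken over all bounded intervals J ⊂ ℝ with |J| > 0. Then c·B ≤ A ≤ C·B. -/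
open MeasureTheory
open scoped ENNReal NNReal
open scoped Classical

/-- The dyadic interval `[2^j m, 2^j (m+1))` encoded by `p = (j, m)`. -/
def dyadicI (p : ℤ × ℤ) : Set ℝ :=
  Set.Ico ((2 : ℝ) ^ p.1 * p.2) ((2 : ℝ) ^ p.1 * (p.2 + 1))

/-- The weak-`L¹` quasinorm `sup_{λ>0} λ |{ |g| > λ }|`, valued in `ℝ≥0∞`. -/
noncomputable def weakL1 (g : ℝ → ℝ) : ℝ≥0∞ :=
  ⨆ (l : ℝ) (_ : 0 < l), ENNReal.ofReal l * volume {x : ℝ | l < |g x|}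

/-- The `L²`-type maximal size of a finite family of coefficients over dyadic
intervals: `A = sup_J ((1/|J|) Σ_{I ⊆ J} |a_I|²)^{1/2}`. -/
noncomputable def sizeA (ℐ : Finset (ℤ × ℤ)) (a : ℤ × ℤ → ℂ) : ℝ≥0∞ :=
  ⨆ (u : ℝ) (v : ℝ) (_ : u < v),
    ((ENNReal.ofReal (v - u))⁻¹ *
      ∑ p ∈ ℐ, Set.indicator {q : ℤ × ℤ | dyadicI q ⊆ Set.Icc u v}
        (fun q => ENNReal.ofReal (‖a q‖ ^ 2)) p) ^ (1 / 2 : ℝ)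

/-- The weak-`L¹` maximal size:
`B = sup_J (1/|J|) ‖(Σ_{I ⊆ J} |a_I|² 1_I/|I|)^{1/2}‖_{L^{1,∞}}`. -/
noncomputable def sizeB (ℐ : Finset (ℤ × ℤ)) (a : ℤ × ℤ → ℂ) : ℝ≥0∞ :=
  ⨆ (u : ℝ) (v : ℝ) (_ : u < v),
    (ENNReal.ofReal (v - u))⁻¹ *
      weakL1 (fun x => Real.sqrt (∑ p ∈ ℐ,
        Set.indicator {q : ℤ × ℤ | dyadicI q ⊆ Set.Icc u v}
          (fun q => ‖a q‖ ^ 2 * Set.indicator (dyadicI q) (fun _ => (1 : ℝ)) x /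
            (2 : ℝ) ^ q.1) p))

noncomputable def Jset (ℐ : Finset (ℤ × ℤ)) (u v : ℝ) : Finset (ℤ × ℤ) :=
  ℐ.filter (fun q => dyadicI q ⊆ Set.Icc u v)

lemma sum_indicator_eq (ℐ : Finset (ℤ × ℤ)) (u v : ℝ) {M : Type*} [AddCommMonoid M]
    (f : ℤ × ℤ → M) :
    ∑ p ∈ ℐ, Set.indicator {q : ℤ × ℤ | dyadicI q ⊆ Set.Icc u v} f p
      = ∑ p ∈ Jset ℐ u v, f p := by
  rw [Jset, Finset.sum_filter]
  refine Finset.sum_congr rfl fun p _ => ?_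
  simp [Set.indicator_apply, Set.mem_setOf_eq]

noncomputable def Ffun (ℐ : Finset (ℤ × ℤ)) (a : ℤ × ℤ → ℂ) (u v : ℝ) (x : ℝ) : ℝ≥0∞ :=
  ∑ p ∈ Jset ℐ u v, (dyadicI p).indicator
    (fun _ => ENNReal.ofReal (‖a p‖ ^ 2 / (2:ℝ) ^ p.1)) x

noncomputable def Sfun (ℐ : Finset (ℤ × ℤ)) (a : ℤ × ℤ → ℂ) (u v : ℝ) (x : ℝ) : ℝ :=
  ∑ p ∈ ℐ, Set.indicator {q : ℤ × ℤ | dyadicI q ⊆ Set.Icc u v}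
    (fun q => ‖a q‖ ^ 2 * Set.indicator (dyadicI q) (fun _ => (1 : ℝ)) x /
      (2 : ℝ) ^ q.1) p

lemma len_pos (j : ℤ) : (0:ℝ) < (2:ℝ) ^ j := zpow_pos (by norm_num) j

lemma intFloor_div_int (a : ℝ) (n : ℤ) (hn : 0 < n) : ⌊a / n⌋ = ⌊a⌋ / n := by
  have key : ∀ z : ℤ, z ≤ ⌊a / n⌋ ↔ z ≤ ⌊a⌋ / n := by
    intro z
    rw [Int.le_floor, le_div_iff₀ (by exact_mod_cast hn : (0:ℝ) < n),
      Int.le_ediv_iff_mul_le hn, Int.le_floor]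
    push_cast
    rfl
  exact le_antisymm ((key _).mp le_rfl) ((key _).mpr le_rfl)

lemma mem_dyadicI (p : ℤ × ℤ) (x : ℝ) : x ∈ dyadicI p ↔ ⌊x / (2:ℝ) ^ p.1⌋ = p.2 := by
  have h := len_pos p.1
  rw [Int.floor_eq_iff]
  constructor
  · rintro ⟨h1, h2⟩
    constructor
    · rw [le_div_iff₀ h]; linarith [mul_comm ((2:ℝ)^p.1) (p.2:ℝ)]
    · rw [div_lt_iff₀ h]; linarith [mul_comm ((2:ℝ)^p.1) ((p.2:ℝ)+1)]
  · rintro ⟨h1, h2⟩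
    rw [le_div_iff₀ h] at h1
    rw [div_lt_iff₀ h] at h2
    constructor
    · linarith [mul_comm ((2:ℝ)^p.1) (p.2:ℝ)]
    · linarith [mul_comm ((2:ℝ)^p.1) ((p.2:ℝ)+1)]

lemma dyadic_subset_of_le {p q : ℤ × ℤ} (hj : p.1 ≤ q.1) {x : ℝ}
    (hp : x ∈ dyadicI p) (hq : x ∈ dyadicI q) : dyadicI p ⊆ dyadicI q := by
  intro y hy
  set n : ℤ := 2 ^ (q.1 - p.1).toNat with hn
  have hn0 : 0 < n := by positivity
  have hlq : (2:ℝ) ^ q.1 = (2:ℝ) ^ p.1 * n := by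
    rw [hn]
    push_cast
    rw [← zpow_natCast (2:ℝ), Int.toNat_of_nonneg (by omega), ← zpow_add₀ (by norm_num)]
    ring_nf
  have key : ∀ z : ℝ, z ∈ dyadicI p → ⌊z / (2:ℝ)^q.1⌋ = ⌊z / (2:ℝ)^p.1⌋ / n := by
    intro z hz
    rw [hlq, ← div_div, intFloor_div_int _ _ hn0]
  rw [mem_dyadicI]
  rw [mem_dyadicI] at hq
  rw [key y hy, key x hp, (mem_dyadicI p x).mp hp, (mem_dyadicI p y).mp hy] at *
  exact hq

lemma dyadic_nested {p q : ℤ × ℤ} (h : (dyadicI p ∩ dyadicI q).Nonempty) :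
    dyadicI p ⊆ dyadicI q ∨ dyadicI q ⊆ dyadicI p := by
  obtain ⟨x, hxp, hxq⟩ := h
  rcases le_total p.1 q.1 with hj | hj
  · exact Or.inl (dyadic_subset_of_le hj hxp hxq)
  · exact Or.inr (dyadic_subset_of_le hj hxq hxp)

lemma dyadicI_nonempty (p : ℤ × ℤ) : (dyadicI p).Nonempty := by
  refine ⟨(2:ℝ)^p.1 * p.2, le_refl _, ?_⟩
  have := len_pos p.1
  push_cast
  nlinarith

lemma len_le_of_subset_Icc {p : ℤ × ℤ} {u v : ℝ} (h : dyadicI p ⊆ Set.Icc u v) :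
    (2:ℝ) ^ p.1 ≤ v - u := by
  have h0 := len_pos p.1
  set l : ℝ := (2:ℝ)^p.1
  set A : ℝ := l * p.2 with hA
  have hend : l * (p.2 + 1) = A + l := by push_cast; ring
  have hmem : ∀ t : ℝ, A ≤ t → t < A + l → u ≤ t ∧ t ≤ v := by
    intro t h1 h2
    have := h ⟨h1, by rw [hend]; exact h2⟩
    exact this
  have hu : u ≤ A := (hmem A le_rfl (by linarith)).1
  have hv : A + l ≤ v := by
    by_contra hc
    push_neg at hc
    set t : ℝ := max A ((v + (A + l))/2) with ht
    have h1 : A ≤ t := le_max_left _ _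
    have h2 : t < A + l := max_lt (by linarith) (by linarith)
    have h3 : v < t := lt_of_lt_of_le (by linarith [(hmem A le_rfl (by linarith)).2] : v < (v + (A+l))/2) (le_max_right _ _)
    exact absurd (hmem t h1 h2).2 (not_le.mpr h3)
  linarith

lemma Sfun_nonneg (ℐ : Finset (ℤ × ℤ)) (a : ℤ × ℤ → ℂ) (u v x : ℝ) :
    0 ≤ Sfun ℐ a u v x := by
  refine Finset.sum_nonneg fun p _ => Set.indicator_nonneg (fun q _ => ?_) p
  have := len_pos q.1
  have : (0:ℝ) ≤ Set.indicator (dyadicI q) (fun _ => (1:ℝ)) x :=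
    Set.indicator_nonneg (fun _ _ => zero_le_one) x
  positivity

lemma ofReal_Sfun (ℐ : Finset (ℤ × ℤ)) (a : ℤ × ℤ → ℂ) (u v x : ℝ) :
    ENNReal.ofReal (Sfun ℐ a u v x) = Ffun ℐ a u v x := by
  rw [Sfun, sum_indicator_eq, Ffun, ENNReal.ofReal_sum_of_nonneg]
  · refine Finset.sum_congr rfl fun p _ => ?_
    by_cases h : x ∈ dyadicI p
    · rw [Set.indicator_of_mem h, Set.indicator_of_mem h]
      norm_num
    · rw [Set.indicator_of_notMem h, Set.indicator_of_notMem h]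
      norm_num
  · intro p _
    have := len_pos p.1
    have : (0:ℝ) ≤ Set.indicator (dyadicI p) (fun _ => (1:ℝ)) x :=
      Set.indicator_nonneg (fun _ _ => zero_le_one) x
    positivity

lemma measurable_Ffun (ℐ : Finset (ℤ × ℤ)) (a : ℤ × ℤ → ℂ) (u v : ℝ) :
    Measurable (Ffun ℐ a u v) := by
  refine Finset.measurable_sum _ fun p _ => ?_
  exact (measurable_const.indicator measurableSet_Ico)

lemma measurableSet_dyadicI (p : ℤ × ℤ) : MeasurableSet (dyadicI p) := measurableSet_Ico

lemma volume_dyadicI (p : ℤ × ℤ) : volume (dyadicI p) = ENNReal.ofReal ((2:ℝ) ^ p.1) := by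
  rw [dyadicI, Real.volume_Ico]
  congr 1
  ring

lemma lintegral_Ffun (ℐ : Finset (ℤ × ℤ)) (a : ℤ × ℤ → ℂ) (u v : ℝ) :
    ∫⁻ x, Ffun ℐ a u v x = ∑ p ∈ Jset ℐ u v, ENNReal.ofReal (‖a p‖ ^ 2) := by
  simp only [Ffun]
  rw [MeasureTheory.lintegral_finset_sum _
    (fun p _ => measurable_const.indicator (measurableSet_Ico (a := (2:ℝ)^p.1 * p.2)))]
  refine Finset.sum_congr rfl fun p _ => ?_
  rw [MeasureTheory.lintegral_indicator (measurableSet_dyadicI p)]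
  rw [MeasureTheory.setLIntegral_const]
  have hl := len_pos p.1
  rw [volume_dyadicI, ← ENNReal.ofReal_mul (by positivity)]
  rw [div_mul_cancel₀]
  exact ne_of_gt hl

lemma termA_le_sizeA (ℐ : Finset (ℤ × ℤ)) (a : ℤ × ℤ → ℂ) {u v : ℝ} (huv : u < v) :
    ((ENNReal.ofReal (v - u))⁻¹ * ∑ p ∈ Jset ℐ u v, ENNReal.ofReal (‖a p‖ ^ 2))
      ^ (1 / 2 : ℝ) ≤ sizeA ℐ a := by
  rw [← sum_indicator_eq ℐ u v]
  exact le_iSup_of_le u (le_iSup_of_le v (le_iSup_of_le huv le_rfl))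

lemma sq_le_of_rpow_half_le {x A : ℝ≥0∞} (h : x ^ (1/2:ℝ) ≤ A) : x ≤ A ^ 2 := by
  have : (x ^ (1/2:ℝ)) ^ 2 ≤ A ^ 2 := pow_le_pow_left' h 2
  rwa [← ENNReal.rpow_natCast (x ^ (1/2:ℝ)) 2, ← ENNReal.rpow_mul,
    (by norm_num : (1/2:ℝ) * (2:ℕ) = 1), ENNReal.rpow_one] at this

lemma carleson (ℐ : Finset (ℤ × ℤ)) (a : ℤ × ℤ → ℂ) (u v : ℝ) (p : ℤ × ℤ) :
    ∑ q ∈ (Jset ℐ u v).filter (fun q => dyadicI q ⊆ dyadicI p),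
      ENNReal.ofReal (‖a q‖ ^ 2)
    ≤ sizeA ℐ a ^ 2 * ENNReal.ofReal ((2:ℝ) ^ p.1) := by
  set u' : ℝ := (2:ℝ)^p.1 * p.2
  set v' : ℝ := (2:ℝ)^p.1 * (p.2 + 1)
  have hl := len_pos p.1
  have huv' : u' < v' := by
    have : (p.2:ℝ) < (p.2:ℝ) + 1 := by linarith
    exact (mul_lt_mul_iff_right₀ hl).mpr (by push_cast; linarith)
  have hvu : v' - u' = (2:ℝ)^p.1 := by ring
  have hsub : (Jset ℐ u v).filter (fun q => dyadicI q ⊆ dyadicI p) ⊆ Jset ℐ u' v' := by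
    intro q hq
    rw [Finset.mem_filter] at hq
    have hq1 : q ∈ ℐ := Finset.mem_of_mem_filter q hq.1
    refine Finset.mem_filter.mpr ⟨hq1, hq.2.trans ?_⟩
    exact (Set.Ico_subset_Icc_self : dyadicI p ⊆ Set.Icc u' v')
  have hsum : ∑ q ∈ (Jset ℐ u v).filter (fun q => dyadicI q ⊆ dyadicI p),
      ENNReal.ofReal (‖a q‖ ^ 2) ≤ ∑ q ∈ Jset ℐ u' v', ENNReal.ofReal (‖a q‖ ^ 2) :=
    Finset.sum_le_sum_of_subset hsub
  have hA := termA_le_sizeA ℐ a huv'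
  have hx := sq_le_of_rpow_half_le hA
  rw [hvu] at hx
  set c : ℝ≥0∞ := ENNReal.ofReal ((2:ℝ)^p.1) with hc
  have hc0 : c ≠ 0 := by simp [hc, ENNReal.ofReal_eq_zero, not_le, hl]
  have hctop : c ≠ ⊤ := ENNReal.ofReal_ne_top
  calc ∑ q ∈ (Jset ℐ u v).filter (fun q => dyadicI q ⊆ dyadicI p),
        ENNReal.ofReal (‖a q‖ ^ 2)
      ≤ ∑ q ∈ Jset ℐ u' v', ENNReal.ofReal (‖a q‖ ^ 2) := hsum
    _ = c * (c⁻¹ * ∑ q ∈ Jset ℐ u' v', ENNReal.ofReal (‖a q‖ ^ 2)) := by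
        rw [← mul_assoc, ENNReal.mul_inv_cancel hc0 hctop, one_mul]
    _ ≤ c * sizeA ℐ a ^ 2 := mul_le_mul_right hx c
    _ = sizeA ℐ a ^ 2 * c := mul_comm _ _

lemma Sfun_pos_mem (ℐ : Finset (ℤ × ℤ)) (a : ℤ × ℤ → ℂ) {u v x : ℝ}
    (h : 0 < Sfun ℐ a u v x) : x ∈ Set.Icc u v := by
  rw [Sfun, sum_indicator_eq] at h
  obtain ⟨p, hp, hpos⟩ := Finset.exists_lt_of_sum_lt
    (by simpa using h :
      ∑ p ∈ Jset ℐ u v, (0:ℝ) < ∑ p ∈ Jset ℐ u v,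
        ‖a p‖ ^ 2 * Set.indicator (dyadicI p) (fun _ => (1:ℝ)) x / (2:ℝ) ^ p.1)
  have hx : x ∈ dyadicI p := by
    by_contra hx
    rw [Set.indicator_of_notMem hx] at hpos
    simp at hpos
  exact (Finset.mem_filter.mp hp).2 hx

lemma chebyshev_window (ℐ : Finset (ℤ × ℤ)) (a : ℤ × ℤ → ℂ) {u v : ℝ} (huv : u < v)
    {l : ℝ} (hl : 0 < l) :
    (ENNReal.ofReal (v - u))⁻¹ *
      (ENNReal.ofReal l * volume {x : ℝ | l < |Real.sqrt (Sfun ℐ a u v x)|})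
    ≤ sizeA ℐ a := by
  set c : ℝ≥0∞ := ENNReal.ofReal (v - u) with hc
  have hc0 : c ≠ 0 := by simp [hc, ENNReal.ofReal_eq_zero, not_le]; linarith
  have hctop : c ≠ ⊤ := ENNReal.ofReal_ne_top
  set Ssum : ℝ≥0∞ := ∑ p ∈ Jset ℐ u v, ENNReal.ofReal (‖a p‖ ^ 2) with hSsum
  set E : Set ℝ := {x : ℝ | l < |Real.sqrt (Sfun ℐ a u v x)|} with hE
  set μ : ℝ≥0∞ := volume E with hμ
  -- pointwise: x ∈ E → l^2 < Sfun x and x ∈ Icc u v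
  have hpt : ∀ x ∈ E, l ^ 2 < Sfun ℐ a u v x := by
    intro x hx
    rw [hE, Set.mem_setOf_eq, abs_of_nonneg (Real.sqrt_nonneg _)] at hx
    have h1 : l ^ 2 < Real.sqrt (Sfun ℐ a u v x) ^ 2 := by
      apply sq_lt_sq' _ hx
      nlinarith [Real.sqrt_nonneg (Sfun ℐ a u v x)]
    rwa [Real.sq_sqrt (Sfun_nonneg ℐ a u v x)] at h1
  have hEIcc : E ⊆ Set.Icc u v := fun x hx =>
    Sfun_pos_mem ℐ a (lt_of_le_of_lt (by positivity) (hpt x hx))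
  have hμc : μ ≤ c := by
    rw [hμ, hc, ← Real.volume_Icc]
    exact measure_mono hEIcc
  -- Chebyshev
  have hcheb : ENNReal.ofReal (l ^ 2) * μ ≤ Ssum := by
    have hsub : E ⊆ {x : ℝ | ENNReal.ofReal (l ^ 2) ≤ Ffun ℐ a u v x} := by
      intro x hx
      rw [Set.mem_setOf_eq, ← ofReal_Sfun]
      exact ENNReal.ofReal_le_ofReal (le_of_lt (hpt x hx))
    calc ENNReal.ofReal (l ^ 2) * μ
        ≤ ENNReal.ofReal (l ^ 2) * volume {x : ℝ | ENNReal.ofReal (l ^ 2) ≤ Ffun ℐ a u v x} :=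
          mul_le_mul_right (measure_mono hsub) _
      _ ≤ ∫⁻ x, Ffun ℐ a u v x :=
          mul_meas_ge_le_lintegral₀ (measurable_Ffun ℐ a u v).aemeasurable _
      _ = Ssum := lintegral_Ffun ℐ a u v
  -- combine
  have hsq : (c⁻¹ * (ENNReal.ofReal l * μ)) ^ (2:ℕ)
      = (c⁻¹ * (ENNReal.ofReal (l ^ 2) * μ)) * (c⁻¹ * μ) := by
    rw [sq l, ENNReal.ofReal_mul hl.le]
    ring
  have hb : (c⁻¹ * (ENNReal.ofReal l * μ)) ^ (2:ℕ) ≤ (c⁻¹ * Ssum) * 1 := by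
    rw [hsq]
    refine mul_le_mul' (mul_le_mul_right hcheb _) ?_
    calc c⁻¹ * μ ≤ c⁻¹ * c := mul_le_mul_right hμc _
      _ = 1 := ENNReal.inv_mul_cancel hc0 hctop
  rw [mul_one] at hb
  have hfin : c⁻¹ * (ENNReal.ofReal l * μ)
      = ((c⁻¹ * (ENNReal.ofReal l * μ)) ^ (2:ℕ)) ^ (1/2:ℝ) := by
    rw [← ENNReal.rpow_natCast, ← ENNReal.rpow_mul]
    norm_num
  calc c⁻¹ * (ENNReal.ofReal l * μ)
      = ((c⁻¹ * (ENNReal.ofReal l * μ)) ^ (2:ℕ)) ^ (1/2:ℝ) := hfin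
    _ ≤ (c⁻¹ * Ssum) ^ (1/2:ℝ) := ENNReal.rpow_le_rpow hb (by norm_num)
    _ ≤ sizeA ℐ a := termA_le_sizeA ℐ a huv

lemma sizeB_le_sizeA (ℐ : Finset (ℤ × ℤ)) (a : ℤ × ℤ → ℂ) : sizeB ℐ a ≤ sizeA ℐ a := by
  rw [sizeB]
  refine iSup_le fun u => iSup_le fun v => iSup_le fun huv => ?_
  rw [weakL1, ENNReal.mul_iSup]
  refine iSup_le fun l => ?_
  rw [ENNReal.mul_iSup]
  refine iSup_le fun hl => ?_
  exact chebyshev_window ℐ a huv hl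

lemma coeff_mul_len (a : ℤ × ℤ → ℂ) (p : ℤ × ℤ) :
    ENNReal.ofReal (‖a p‖ ^ 2 / (2:ℝ) ^ p.1) * ENNReal.ofReal ((2:ℝ) ^ p.1)
      = ENNReal.ofReal (‖a p‖ ^ 2) := by
  have hl := len_pos p.1
  rw [← ENNReal.ofReal_mul (by positivity), div_mul_cancel₀ _ (ne_of_gt hl)]

lemma sizeA_lt_top (ℐ : Finset (ℤ × ℤ)) (a : ℤ × ℤ → ℂ) : sizeA ℐ a < ⊤ := by
  have key : sizeA ℐ a ≤ (∑ p ∈ ℐ, ENNReal.ofReal (‖a p‖ ^ 2 / (2:ℝ) ^ p.1)) ^ (1/2:ℝ) := by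
    rw [sizeA]
    refine iSup_le fun u => iSup_le fun v => iSup_le fun huv => ?_
    refine ENNReal.rpow_le_rpow ?_ (by norm_num)
    rw [sum_indicator_eq, Finset.mul_sum]
    calc ∑ p ∈ Jset ℐ u v, (ENNReal.ofReal (v - u))⁻¹ * ENNReal.ofReal (‖a p‖ ^ 2)
        ≤ ∑ p ∈ Jset ℐ u v, ENNReal.ofReal (‖a p‖ ^ 2 / (2:ℝ) ^ p.1) := by
          refine Finset.sum_le_sum fun p hp => ?_
          have hlen : (2:ℝ) ^ p.1 ≤ v - u :=
            len_le_of_subset_Icc (Finset.mem_filter.mp hp).2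
          have hl := len_pos p.1
          have h1 : (ENNReal.ofReal (v - u))⁻¹ ≤ (ENNReal.ofReal ((2:ℝ)^p.1))⁻¹ :=
            ENNReal.inv_le_inv.mpr (ENNReal.ofReal_le_ofReal hlen)
          calc (ENNReal.ofReal (v - u))⁻¹ * ENNReal.ofReal (‖a p‖ ^ 2)
              ≤ (ENNReal.ofReal ((2:ℝ)^p.1))⁻¹ * ENNReal.ofReal (‖a p‖ ^ 2) :=
                mul_le_mul_left h1 _
            _ = ENNReal.ofReal (‖a p‖ ^ 2 / (2:ℝ) ^ p.1) := by
                rw [ENNReal.ofReal_div_of_pos hl, div_eq_mul_inv, mul_comm]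
      _ ≤ ∑ p ∈ ℐ, ENNReal.ofReal (‖a p‖ ^ 2 / (2:ℝ) ^ p.1) :=
          Finset.sum_le_sum_of_subset (Finset.filter_subset _ _)
  refine lt_of_le_of_lt key ?_
  exact ENNReal.rpow_lt_top_of_nonneg (by norm_num) (by
    exact (ENNReal.sum_lt_top.mpr fun p _ => ENNReal.ofReal_lt_top).ne)

lemma lintegral_Ffun_sq (ℐ : Finset (ℤ × ℤ)) (a : ℤ × ℤ → ℂ) (u v : ℝ) :
    ∫⁻ x, (Ffun ℐ a u v x) ^ 2
      ≤ 2 * sizeA ℐ a ^ 2 * ∑ p ∈ Jset ℐ u v, ENNReal.ofReal (‖a p‖ ^ 2) := by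
  set J := Jset ℐ u v
  set cf : ℤ × ℤ → ℝ≥0∞ := fun p => ENNReal.ofReal (‖a p‖ ^ 2 / (2:ℝ) ^ p.1) with hcf
  have hsq : ∀ x, (Ffun ℐ a u v x) ^ 2
      = ∑ p ∈ J, ∑ q ∈ J, (dyadicI p ∩ dyadicI q).indicator (fun _ => cf p * cf q) x := by
    intro x
    rw [Ffun, sq, Finset.sum_mul_sum]
    refine Finset.sum_congr rfl fun p _ => Finset.sum_congr rfl fun q _ => ?_
    by_cases hp : x ∈ dyadicI p <;> by_cases hq : x ∈ dyadicI q <;>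
      simp [Set.indicator_apply, hp, hq, hcf]
  calc ∫⁻ x, (Ffun ℐ a u v x) ^ 2
      = ∑ p ∈ J, ∑ q ∈ J, cf p * cf q * volume (dyadicI p ∩ dyadicI q) := by
        simp_rw [hsq]
        rw [MeasureTheory.lintegral_finset_sum _ (fun p _ => Finset.measurable_sum _
          (fun q _ => measurable_const.indicator
            ((measurableSet_dyadicI p).inter (measurableSet_dyadicI q))))]
        refine Finset.sum_congr rfl fun p _ => ?_
        rw [MeasureTheory.lintegral_finset_sum _ (fun q _ => measurable_const.indicator
          ((measurableSet_dyadicI p).inter (measurableSet_dyadicI q)))]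
        refine Finset.sum_congr rfl fun q _ => ?_
        rw [MeasureTheory.lintegral_indicator
          ((measurableSet_dyadicI p).inter (measurableSet_dyadicI q)),
          MeasureTheory.setLIntegral_const]
    _ ≤ ∑ p ∈ J, ∑ q ∈ J, cf p * cf q *
          ((if dyadicI q ⊆ dyadicI p then volume (dyadicI q) else 0)
            + (if dyadicI p ⊆ dyadicI q then volume (dyadicI p) else 0)) := by
        refine Finset.sum_le_sum fun p _ => Finset.sum_le_sum fun q _ => ?_
        refine mul_le_mul_right ?_ _
        rcases Set.eq_empty_or_nonempty (dyadicI p ∩ dyadicI q) with he | hne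
        · rw [he]; simp
        · rcases dyadic_nested hne with h | h
          · rw [if_pos h]
            exact le_trans (measure_mono Set.inter_subset_left) le_add_self
          · rw [if_pos h]
            exact le_trans (measure_mono Set.inter_subset_right) le_self_add
    _ ≤ 2 * sizeA ℐ a ^ 2 * ∑ p ∈ J, ENNReal.ofReal (‖a p‖ ^ 2) := by
        have inner : ∀ p : ℤ × ℤ,
            (∑ q ∈ J, if dyadicI q ⊆ dyadicI p then cf q * volume (dyadicI q) else 0)
              ≤ sizeA ℐ a ^ 2 * ENNReal.ofReal ((2:ℝ) ^ p.1) := by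
          intro p
          rw [← Finset.sum_filter]
          calc ∑ q ∈ J.filter (fun q => dyadicI q ⊆ dyadicI p), cf q * volume (dyadicI q)
              = ∑ q ∈ J.filter (fun q => dyadicI q ⊆ dyadicI p), ENNReal.ofReal (‖a q‖ ^ 2) := by
                refine Finset.sum_congr rfl fun q _ => ?_
                rw [hcf, volume_dyadicI, coeff_mul_len]
            _ ≤ sizeA ℐ a ^ 2 * ENNReal.ofReal ((2:ℝ) ^ p.1) := carleson ℐ a u v p
        have hpt : ∀ p q : ℤ × ℤ,
            cf p * cf q * ((if dyadicI q ⊆ dyadicI p then volume (dyadicI q) else 0)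
              + (if dyadicI p ⊆ dyadicI q then volume (dyadicI p) else 0))
            = cf p * (if dyadicI q ⊆ dyadicI p then cf q * volume (dyadicI q) else 0)
              + cf q * (if dyadicI p ⊆ dyadicI q then cf p * volume (dyadicI p) else 0) := by
          intro p q
          split_ifs <;> ring_nf <;> simp <;> ring_nf
        simp_rw [hpt, Finset.sum_add_distrib, ← Finset.mul_sum]
        have hS1 : ∑ p ∈ J, cf p *
            (∑ q ∈ J, if dyadicI q ⊆ dyadicI p then cf q * volume (dyadicI q) else 0)
            ≤ sizeA ℐ a ^ 2 * ∑ p ∈ J, ENNReal.ofReal (‖a p‖ ^ 2) := by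
          rw [Finset.mul_sum]
          refine Finset.sum_le_sum fun p _ => ?_
          calc cf p * (∑ q ∈ J, if dyadicI q ⊆ dyadicI p then cf q * volume (dyadicI q) else 0)
              ≤ cf p * (sizeA ℐ a ^ 2 * ENNReal.ofReal ((2:ℝ) ^ p.1)) :=
                mul_le_mul_right (inner p) _
            _ = sizeA ℐ a ^ 2 * ENNReal.ofReal (‖a p‖ ^ 2) := by
                rw [← mul_assoc, mul_comm (cf p), mul_assoc, hcf, coeff_mul_len]
        have hS2 : ∑ p ∈ J, ∑ q ∈ J, cf q *
            (if dyadicI p ⊆ dyadicI q then cf p * volume (dyadicI p) else 0)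
            ≤ sizeA ℐ a ^ 2 * ∑ p ∈ J, ENNReal.ofReal (‖a p‖ ^ 2) := by
          rw [Finset.sum_comm]
          simp_rw [← Finset.mul_sum]
          rw [Finset.mul_sum]
          refine Finset.sum_le_sum fun q _ => ?_
          calc cf q * (∑ p ∈ J, if dyadicI p ⊆ dyadicI q then cf p * volume (dyadicI p) else 0)
              ≤ cf q * (sizeA ℐ a ^ 2 * ENNReal.ofReal ((2:ℝ) ^ q.1)) :=
                mul_le_mul_right (inner q) _
            _ = sizeA ℐ a ^ 2 * ENNReal.ofReal (‖a q‖ ^ 2) := by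
                rw [← mul_assoc, mul_comm (cf q), mul_assoc, hcf, coeff_mul_len]
        calc _ ≤ sizeA ℐ a ^ 2 * (∑ p ∈ J, ENNReal.ofReal (‖a p‖ ^ 2))
              + sizeA ℐ a ^ 2 * (∑ p ∈ J, ENNReal.ofReal (‖a p‖ ^ 2)) := add_le_add hS1 hS2
          _ = 2 * sizeA ℐ a ^ 2 * ∑ p ∈ J, ENNReal.ofReal (‖a p‖ ^ 2) := by ring

lemma Ffun_pos_mem (ℐ : Finset (ℤ × ℤ)) (a : ℤ × ℤ → ℂ) {u v x : ℝ}
    (h : Ffun ℐ a u v x ≠ 0) : x ∈ Set.Icc u v := by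
  rw [← ofReal_Sfun] at h
  refine Sfun_pos_mem ℐ a (lt_of_le_of_ne (Sfun_nonneg ℐ a u v x) ?_)
  intro he
  exact h (by rw [← he, ENNReal.ofReal_zero])

lemma rpow_half_pow_two (x : ℝ≥0∞) : (x ^ (1/2:ℝ)) ^ 2 = x := by
  rw [← ENNReal.rpow_natCast (x ^ (1/2:ℝ)) 2, ← ENNReal.rpow_mul]
  norm_num

lemma pow_two_rpow_half (x : ℝ≥0∞) : (x ^ 2) ^ (1/2:ℝ) = x := by
  rw [← ENNReal.rpow_natCast x 2, ← ENNReal.rpow_mul]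
  norm_num

lemma main_window (ℐ : Finset (ℤ × ℤ)) (a : ℤ × ℤ → ℂ) {u v : ℝ} (huv : u < v) :
    (((ENNReal.ofReal (v - u))⁻¹ *
        ∑ p ∈ Jset ℐ u v, ENNReal.ofReal (‖a p‖ ^ 2)) ^ (1 / 2 : ℝ)) ^ 3
      ≤ 16 * sizeA ℐ a ^ 2 * sizeB ℐ a := by
  classical
  set c : ℝ≥0∞ := ENNReal.ofReal (v - u) with hc
  have hc0 : c ≠ 0 := by simp [hc, ENNReal.ofReal_eq_zero, not_le]; linarith
  have hctop : c ≠ ⊤ := ENNReal.ofReal_ne_top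
  set Ssum : ℝ≥0∞ := ∑ p ∈ Jset ℐ u v, ENNReal.ofReal (‖a p‖ ^ 2) with hSsum
  have hStop : Ssum ≠ ⊤ := by
    rw [hSsum]
    exact (ENNReal.sum_lt_top.mpr fun p _ => ENNReal.ofReal_lt_top).ne
  rcases eq_or_ne Ssum 0 with hS0 | hS0
  · rw [hS0, mul_zero, ENNReal.zero_rpow_of_pos (by norm_num), zero_pow (by norm_num)]
    exact zero_le
  -- nondegenerate case
  set σ : ℝ := Ssum.toReal with hσdef
  have hσpos : 0 < σ := ENNReal.toReal_pos hS0 hStop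
  have hSofReal : ENNReal.ofReal σ = Ssum := ENNReal.ofReal_toReal hStop
  set lr : ℝ := σ / (2 * (v - u)) with hlr
  have hlrpos : 0 < lr := by
    apply div_pos hσpos
    linarith
  set L : ℝ≥0∞ := ENNReal.ofReal lr with hL
  have hL2c : L * (2 * c) = Ssum := by
    rw [hL, hc, (by norm_num : (2:ℝ≥0∞) = ENNReal.ofReal 2),
      ← ENNReal.ofReal_mul (by norm_num), ← ENNReal.ofReal_mul hlrpos.le, hlr,
      div_mul_cancel₀ _ (by nlinarith : (2:ℝ) * (v - u) ≠ 0), hSofReal]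
  have hLc : L * c = Ssum / 2 := by
    rw [ENNReal.eq_div_iff (by norm_num) (by norm_num), ← hL2c]
    ring
  set E : Set ℝ := {x : ℝ | L < Ffun ℐ a u v x} with hE
  have hEmeas : MeasurableSet E := measurableSet_lt measurable_const (measurable_Ffun ℐ a u v)
  set μE : ℝ≥0∞ := volume E with hμE
  -- off E, F is at most the constant L on Icc u v
  have h1 : ∫⁻ x in Eᶜ, Ffun ℐ a u v x ≤ Ssum / 2 := by
    have hpt : ∀ x ∈ Eᶜ, Ffun ℐ a u v x ≤ (Set.Icc u v).indicator (fun _ => L) x := by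
      intro x hx
      rcases eq_or_ne (Ffun ℐ a u v x) 0 with h0 | h0
      · rw [h0]; exact zero_le
      · rw [Set.indicator_of_mem (Ffun_pos_mem ℐ a h0)]
        exact not_lt.mp hx
    calc ∫⁻ x in Eᶜ, Ffun ℐ a u v x
        ≤ ∫⁻ x in Eᶜ, (Set.Icc u v).indicator (fun _ => L) x :=
          setLIntegral_mono (measurable_const.indicator measurableSet_Icc) hpt
      _ ≤ ∫⁻ x, (Set.Icc u v).indicator (fun _ => L) x := setLIntegral_le_lintegral _ _
      _ = Ssum / 2 := by
          rw [MeasureTheory.lintegral_indicator measurableSet_Icc,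
            MeasureTheory.setLIntegral_const, Real.volume_Icc]
          exact hLc
  have h2 : Ssum / 2 ≤ ∫⁻ x in E, Ffun ℐ a u v x := by
    have hsplit : (∫⁻ x in E, Ffun ℐ a u v x) + ∫⁻ x in Eᶜ, Ffun ℐ a u v x
        = ∫⁻ x, Ffun ℐ a u v x := lintegral_add_compl _ hEmeas
    have hfull : (∫⁻ x, Ffun ℐ a u v x) = Ssum := lintegral_Ffun ℐ a u v
    have : Ssum / 2 + Ssum / 2 ≤ (∫⁻ x in E, Ffun ℐ a u v x) + Ssum / 2 := by
      rw [ENNReal.add_halves]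
      calc Ssum = (∫⁻ x in E, Ffun ℐ a u v x) + ∫⁻ x in Eᶜ, Ffun ℐ a u v x := by
            rw [hsplit, hfull]
        _ ≤ (∫⁻ x in E, Ffun ℐ a u v x) + Ssum / 2 := add_le_add_right h1 _
    have hfin : Ssum / 2 ≠ ⊤ := by
      exact (ENNReal.div_lt_top hStop (by norm_num)).ne
    exact (ENNReal.add_le_add_iff_right hfin).mp this
  -- Cauchy-Schwarz
  have hpow2 : ∀ y : ℝ≥0∞, y ^ (2:ℝ) = y ^ 2 := fun y => by
    rw [← ENNReal.rpow_natCast y 2]; norm_num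
  have h3 : ∫⁻ x in E, Ffun ℐ a u v x
      ≤ (∫⁻ x in E, (Ffun ℐ a u v x) ^ 2) ^ (1/2:ℝ) * μE ^ (1/2:ℝ) := by
    have hpq : Real.HolderConjugate 2 2 := Real.HolderConjugate.two_two
    have hcs := ENNReal.lintegral_mul_le_Lp_mul_Lq (volume.restrict E) hpq
      (measurable_Ffun ℐ a u v).aemeasurable
      (aemeasurable_const (b := (1:ℝ≥0∞)))
    simp only [Pi.mul_apply, mul_one, one_pow, ENNReal.one_rpow, hpow2,
      MeasureTheory.setLIntegral_one] at hcs
    exact hcs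
  have h4 : ∫⁻ x in E, (Ffun ℐ a u v x) ^ 2 ≤ 2 * sizeA ℐ a ^ 2 * Ssum :=
    le_trans (setLIntegral_le_lintegral _ _) (lintegral_Ffun_sq ℐ a u v)
  have h6 : (Ssum / 2) ^ 2 ≤ 2 * sizeA ℐ a ^ 2 * Ssum * μE := by
    have h5 : Ssum / 2 ≤ ((2 * sizeA ℐ a ^ 2 * Ssum) * μE) ^ (1/2:ℝ) := by
      calc Ssum / 2 ≤ ∫⁻ x in E, Ffun ℐ a u v x := h2
        _ ≤ (∫⁻ x in E, (Ffun ℐ a u v x) ^ 2) ^ (1/2:ℝ) * μE ^ (1/2:ℝ) := h3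
        _ ≤ (2 * sizeA ℐ a ^ 2 * Ssum) ^ (1/2:ℝ) * μE ^ (1/2:ℝ) :=
            mul_le_mul_left (ENNReal.rpow_le_rpow h4 (by norm_num)) _
        _ = ((2 * sizeA ℐ a ^ 2 * Ssum) * μE) ^ (1/2:ℝ) :=
            (ENNReal.mul_rpow_of_nonneg _ _ (by norm_num)).symm
    calc (Ssum / 2) ^ 2 ≤ (((2 * sizeA ℐ a ^ 2 * Ssum) * μE) ^ (1/2:ℝ)) ^ 2 :=
          pow_le_pow_left' h5 2
      _ = 2 * sizeA ℐ a ^ 2 * Ssum * μE := rpow_half_pow_two _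
  -- weak L1 lower bound
  set s : ℝ≥0∞ := ENNReal.ofReal (Real.sqrt lr) with hs
  have hs2 : s ^ 2 = L := by
    rw [hs, ← ENNReal.ofReal_pow (Real.sqrt_nonneg _), Real.sq_sqrt hlrpos.le, hL]
  have hWB : s * μE ≤ c * sizeB ℐ a := by
    have hsub : E ⊆ {x : ℝ | Real.sqrt lr < |Real.sqrt (Sfun ℐ a u v x)|} := by
      intro x hx
      rw [hE, Set.mem_setOf_eq, ← ofReal_Sfun, hL] at hx
      have hlt : lr < Sfun ℐ a u v x :=
        (ENNReal.ofReal_lt_ofReal_iff_of_nonneg hlrpos.le).mp hx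
      rw [Set.mem_setOf_eq, abs_of_nonneg (Real.sqrt_nonneg _)]
      exact Real.sqrt_lt_sqrt hlrpos.le hlt
    have hW : s * μE ≤ weakL1 (fun x => Real.sqrt (Sfun ℐ a u v x)) := by
      rw [weakL1]
      refine le_trans (mul_le_mul_right (measure_mono hsub) s) ?_
      exact le_iSup_of_le (Real.sqrt lr)
        (le_iSup_of_le (Real.sqrt_pos.mpr hlrpos) le_rfl)
    have hB : c⁻¹ * weakL1 (fun x => Real.sqrt (Sfun ℐ a u v x)) ≤ sizeB ℐ a := by
      rw [sizeB]
      exact le_iSup_of_le u (le_iSup_of_le v (le_iSup_of_le huv le_rfl))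
    calc s * μE ≤ weakL1 (fun x => Real.sqrt (Sfun ℐ a u v x)) := hW
      _ = c * (c⁻¹ * weakL1 (fun x => Real.sqrt (Sfun ℐ a u v x))) := by
          rw [← mul_assoc, ENNReal.mul_inv_cancel hc0 hctop, one_mul]
      _ ≤ c * sizeB ℐ a := mul_le_mul_right hB c
  -- algebra
  rcases eq_or_ne (sizeA ℐ a) 0 with hA0 | hA0
  · have hterm := termA_le_sizeA ℐ a huv
    rw [hA0, le_zero_iff] at hterm
    rw [← hc] at hterm
    rw [hterm, zero_pow (by norm_num)]
    exact zero_le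
  have hAtop : sizeA ℐ a ≠ ⊤ := (sizeA_lt_top ℐ a).ne
  set A : ℝ≥0∞ := sizeA ℐ a with hA
  set t : ℝ≥0∞ := ((c⁻¹ * Ssum) ^ (1/2:ℝ)) with ht
  have ht2 : t ^ 2 = c⁻¹ * Ssum := rpow_half_pow_two _
  have hts : t ^ 2 = 2 * s ^ 2 := by
    rw [ht2, hs2]
    calc c⁻¹ * Ssum = c⁻¹ * (L * (2 * c)) := by rw [hL2c]
      _ = (c⁻¹ * c) * (2 * L) := by ring
      _ = 2 * L := by rw [ENNReal.inv_mul_cancel hc0 hctop, one_mul]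
  have ht_le : t ≤ 2 * s := by
    have h1 : t ^ 2 ≤ (2 * s) ^ 2 := by
      rw [hts, mul_pow]
      exact mul_le_mul_left (by norm_num : (2:ℝ≥0∞) ≤ 2 ^ 2) _
    calc t = (t ^ 2) ^ (1/2:ℝ) := (pow_two_rpow_half t).symm
      _ ≤ ((2 * s) ^ 2) ^ (1/2:ℝ) := ENNReal.rpow_le_rpow h1 (by norm_num)
      _ = 2 * s := pow_two_rpow_half _
  have hstop : s ≠ ⊤ := ENNReal.ofReal_ne_top
  -- the key chain
  have hchain : t ^ 3 * (2 * A ^ 2 * Ssum * c) ≤ (16 * A ^ 2 * sizeB ℐ a) * (2 * A ^ 2 * Ssum * c) := by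
    have step1 : t ^ 3 * (2 * Ssum * c) ≤ 8 * s ^ 3 * Ssum * c := by
      calc t ^ 3 * (2 * Ssum * c) = (t * t ^ 2) * (2 * Ssum * c) := by ring
        _ = (t * (2 * s ^ 2)) * (2 * Ssum * c) := by rw [hts]
        _ ≤ ((2 * s) * (2 * s ^ 2)) * (2 * Ssum * c) :=
            mul_le_mul_left (mul_le_mul_left ht_le _) _
        _ = 8 * s ^ 3 * Ssum * c := by ring
    have step2 : 8 * s ^ 3 * Ssum * c = 4 * (s * Ssum ^ 2) := by
      calc 8 * s ^ 3 * Ssum * c = 4 * s * Ssum * (s ^ 2 * (2 * c)) := by ring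
        _ = 4 * s * Ssum * Ssum := by rw [hs2, hL2c]
        _ = 4 * (s * Ssum ^ 2) := by ring
    have hhalf : 2 * (Ssum / 2) = Ssum :=
      ENNReal.mul_div_cancel' (by norm_num) (by norm_num)
    have step3 : 4 * (s * Ssum ^ 2) = 16 * (s * (Ssum / 2) ^ 2) := by
      calc 4 * (s * Ssum ^ 2) = 4 * (s * (2 * (Ssum / 2)) ^ 2) := by rw [hhalf]
        _ = 16 * (s * (Ssum / 2) ^ 2) := by ring
    have step4 : 16 * (s * (Ssum / 2) ^ 2) ≤ 16 * (s * (2 * A ^ 2 * Ssum * μE)) :=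
      mul_le_mul_right (mul_le_mul_right h6 s) _
    calc t ^ 3 * (2 * A ^ 2 * Ssum * c) = A ^ 2 * (t ^ 3 * (2 * Ssum * c)) := by ring
      _ ≤ A ^ 2 * (8 * s ^ 3 * Ssum * c) := mul_le_mul_right step1 _
      _ = A ^ 2 * (16 * (s * (Ssum / 2) ^ 2)) := by rw [step2, step3]
      _ ≤ A ^ 2 * (16 * (s * (2 * A ^ 2 * Ssum * μE))) := mul_le_mul_right step4 _
      _ = (16 * A ^ 2 * (2 * A ^ 2 * Ssum)) * (s * μE) := by ring
      _ ≤ (16 * A ^ 2 * (2 * A ^ 2 * Ssum)) * (c * sizeB ℐ a) := mul_le_mul_right hWB _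
      _ = (16 * A ^ 2 * sizeB ℐ a) * (2 * A ^ 2 * Ssum * c) := by ring
  have hK0 : (2 * A ^ 2 * Ssum * c) ≠ 0 := by
    refine mul_ne_zero (mul_ne_zero (mul_ne_zero (by norm_num) ?_) hS0) hc0
    exact pow_ne_zero 2 hA0
  have hKtop : (2 * A ^ 2 * Ssum * c) ≠ ⊤ := by
    refine ENNReal.mul_ne_top (ENNReal.mul_ne_top (ENNReal.mul_ne_top (by norm_num) ?_) hStop) hctop
    exact ENNReal.pow_ne_top hAtop
  exact (ENNReal.mul_le_mul_iff_left hK0 hKtop).mp hchain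

lemma rpow_third_pow_three (x : ℝ≥0∞) : (x ^ (1/3:ℝ)) ^ 3 = x := by
  rw [← ENNReal.rpow_natCast (x ^ (1/3:ℝ)) 3, ← ENNReal.rpow_mul]
  norm_num

lemma pow_three_rpow_third (x : ℝ≥0∞) : (x ^ 3) ^ (1/3:ℝ) = x := by
  rw [← ENNReal.rpow_natCast x 3, ← ENNReal.rpow_mul]
  norm_num

/-- Lemma (equivalence of the `L²` and weak-`L¹` maximal sizes): there are
absolute constants `c, C > 0` with `c B ≤ A ≤ C B` for every finite collection
of dyadic intervals and coefficients. -/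
theorem size_equivalence :
    ∃ c C : ℝ, 0 < c ∧ 0 < C ∧
      ∀ (ℐ : Finset (ℤ × ℤ)) (a : ℤ × ℤ → ℂ),
        ENNReal.ofReal c * sizeB ℐ a ≤ sizeA ℐ a ∧
        sizeA ℐ a ≤ ENNReal.ofReal C * sizeB ℐ a := by
  refine ⟨1, 16, one_pos, by norm_num, fun ℐ a => ⟨?_, ?_⟩⟩
  · rw [ENNReal.ofReal_one, one_mul]
    exact sizeB_le_sizeA ℐ a
  · have h16 : ENNReal.ofReal (16:ℝ) = (16:ℝ≥0∞) := by
      rw [ENNReal.ofReal_ofNat]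
    rw [h16]
    have hsup : sizeA ℐ a ≤ (16 * sizeA ℐ a ^ 2 * sizeB ℐ a) ^ (1/3:ℝ) := by
      rw [sizeA]
      refine iSup_le fun u => iSup_le fun v => iSup_le fun huv => ?_
      rw [sum_indicator_eq]
      set t : ℝ≥0∞ := ((ENNReal.ofReal (v - u))⁻¹ *
        ∑ p ∈ Jset ℐ u v, ENNReal.ofReal (‖a p‖ ^ 2)) ^ (1/2:ℝ)
      calc t = (t ^ 3) ^ (1/3:ℝ) := (pow_three_rpow_third t).symm
        _ ≤ (16 * sizeA ℐ a ^ 2 * sizeB ℐ a) ^ (1/3:ℝ) :=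
            ENNReal.rpow_le_rpow (main_window ℐ a huv) (by norm_num)
    have hA3 : sizeA ℐ a ^ 3 ≤ 16 * sizeA ℐ a ^ 2 * sizeB ℐ a := by
      calc sizeA ℐ a ^ 3 ≤ ((16 * sizeA ℐ a ^ 2 * sizeB ℐ a) ^ (1/3:ℝ)) ^ 3 :=
            pow_le_pow_left' hsup 3
        _ = 16 * sizeA ℐ a ^ 2 * sizeB ℐ a := rpow_third_pow_three _
    rcases eq_or_ne (sizeA ℐ a) 0 with hA0 | hA0
    · rw [hA0]; exact zero_le
    · have hAtop : sizeA ℐ a ≠ ⊤ := (sizeA_lt_top ℐ a).ne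
      have h1 : sizeA ℐ a * sizeA ℐ a ^ 2 ≤ (16 * sizeB ℐ a) * sizeA ℐ a ^ 2 := by
        calc sizeA ℐ a * sizeA ℐ a ^ 2 = sizeA ℐ a ^ 3 := by ring
          _ ≤ 16 * sizeA ℐ a ^ 2 * sizeB ℐ a := hA3
          _ = (16 * sizeB ℐ a) * sizeA ℐ a ^ 2 := by ring
      exact (ENNReal.mul_le_mul_iff_left (pow_ne_zero 2 hA0) (ENNReal.pow_ne_top hAtop)).mp h1
end
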